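/- arXiv:1910.08481 — 6 statements merged into one kernel-verified Lean document; each statement's English description precedes it below -/
import Mathlib

section
/- Let 0<σ<σ', k∈{0,1,2}, l∈{0,1}, and let f∈C^∞([0,1];ℂ) be (σ',2)-Gevrey. Then there exists a constant C>0, depending only on σ, σ', k, l and f, such that for every u∈C^∞([0,1];ℂ) with ‖u‖_{σ,k,l} < ∞ one has ‖f·u‖_{σ,k,l} ≤ C ‖u‖_{σ,k,l} (in particular ‖f·u‖_{σ,k,l} < ∞). -/
noncomputable section

open Filter Set MeasureTheory
open scoped ENNReal Topology

/-- The `n`-th term of the Gevrey seminorm sum: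
`σ^{2n}/(n!^2 (n+1)!^2) · n^{k+l} · ∫_0^1 (x/σ)^k |u^{(n)}(x)|^2 dx`. -/
def gTerm (σ : ℝ) (k l : ℕ) (u : ℝ → ℂ) (n : ℕ) : ℝ :=
  σ ^ (2 * n) / ((n.factorial : ℝ) ^ 2 * ((n + 1).factorial : ℝ) ^ 2) * (n : ℝ) ^ (k + l) *
    ∫ x in (0:ℝ)..1, (x / σ) ^ k * ‖iteratedDeriv n u x‖ ^ 2

/-- The `n`-th term of the boundary Gevrey seminorm sum:
`σ^{2n+1}/(n!^2 (n+1)!^2) · |u^{(n)}(0)|^2`. -/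
def bTerm (σ : ℝ) (u : ℝ → ℂ) (n : ℕ) : ℝ :=
  σ ^ (2 * n + 1) / ((n.factorial : ℝ) ^ 2 * ((n + 1).factorial : ℝ) ^ 2) *
    ‖iteratedDeriv n u 0‖ ^ 2

/-- Partial Gevrey seminorm `|u|_{σ,k,l}^{N,M}` (real valued, a finite sum). -/
def psemR (σ : ℝ) (k l N M : ℕ) (u : ℝ → ℂ) : ℝ :=
  Real.sqrt (∑ n ∈ Finset.Icc N M, gTerm σ k l u n)

/-- Partial boundary Gevrey seminorm `[u]_σ^{N,M}` (real valued, a finite sum). -/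
def bsemPR (σ : ℝ) (N M : ℕ) (u : ℝ → ℂ) : ℝ :=
  Real.sqrt (∑ n ∈ Finset.Icc N M, bTerm σ u n)

/-- Full Gevrey seminorm `|u|_{σ,k,l}^{N}`, valued in `ℝ≥0∞`. -/
def fsem (σ : ℝ) (k l N : ℕ) (u : ℝ → ℂ) : ℝ≥0∞ :=
  (∑' n : ℕ, if N ≤ n then ENNReal.ofReal (gTerm σ k l u n) else 0) ^ (1/2 : ℝ)

/-- Full boundary Gevrey seminorm `[u]_σ^{N}`, valued in `ℝ≥0∞`. -/
def bsem (σ : ℝ) (N : ℕ) (u : ℝ → ℂ) : ℝ≥0∞ :=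
  (∑' n : ℕ, if N ≤ n then ENNReal.ofReal (bTerm σ u n) else 0) ^ (1/2 : ℝ)

/-- Real value of the full Gevrey seminorm (`= toReal` of `fsem`). -/
def fsemR (σ : ℝ) (k l N : ℕ) (u : ℝ → ℂ) : ℝ := (fsem σ k l N u).toReal

/-- Real value of the full boundary Gevrey seminorm. -/
def bsemR (σ : ℝ) (N : ℕ) (u : ℝ → ℂ) : ℝ := (bsem σ N u).toReal

/-- The norm `‖u‖_{σ,k,l}`: for `(k,l) = (0,0)` it is `|u|_{σ,0,0}^0`, otherwise
`|u|_{σ,k,l}^0 + (∫_0^1 (x/σ)^k |u|^2)^{1/2}`. -/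
def gnorm (σ : ℝ) (k l : ℕ) (u : ℝ → ℂ) : ℝ≥0∞ :=
  if k = 0 ∧ l = 0 then fsem σ 0 0 0 u
  else fsem σ k l 0 u +
    ENNReal.ofReal (Real.sqrt (∫ x in (0:ℝ)..1, (x / σ) ^ k * ‖u x‖ ^ 2))

/-- The `X^σ` norm: `‖u'‖_{σ,0,0} + |u'|_{σ,1,0}^0 + |u'|_{σ,2,0}^0 + [u']_σ^0`. -/
def Xnorm (σ : ℝ) (u : ℝ → ℂ) : ℝ≥0∞ :=
  fsem σ 0 0 0 (deriv u) + fsem σ 1 0 0 (deriv u) + fsem σ 2 0 0 (deriv u) +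
    bsem σ 0 (deriv u)

/-- The `Y^σ` norm: `‖u‖_{σ,0,0} + |u|_{σ,1,0}^0 + [u]_σ^0`. -/
def Ynorm (σ : ℝ) (u : ℝ → ℂ) : ℝ≥0∞ :=
  fsem σ 0 0 0 u + fsem σ 1 0 0 u + bsem σ 0 u

/-- Membership in `X^σ`: smooth, Dirichlet condition at `1`, finite `X^σ` norm. -/
def MemX (σ : ℝ) (u : ℝ → ℂ) : Prop :=
  ContDiff ℝ (⊤ : ℕ∞) u ∧ u 1 = 0 ∧ Xnorm σ u ≠ ⊤

/-- Membership in `Y^σ`: smooth with finite `Y^σ` norm. -/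
def MemY (σ : ℝ) (u : ℝ → ℂ) : Prop :=
  ContDiff ℝ (⊤ : ℕ∞) u ∧ Ynorm σ u ≠ ⊤

/-- `f` is `(σ', 2)`-Gevrey regular on `[0,1]`. -/
def IsGevrey2 (σ' : ℝ) {E : Type*} [NormedAddCommGroup E] [NormedSpace ℝ E]
    (f : ℝ → E) : Prop :=
  ∃ K : ℝ, 0 < K ∧ ∀ n : ℕ, ∀ x ∈ Set.Icc (0:ℝ) 1,
    ‖iteratedDeriv n f x‖ ≤ K * (n.factorial : ℝ) ^ 2 / σ' ^ n

/-- `u, f` satisfy the shifted ODE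
`((κx+x²)u')' + s u' − N(N+1)u + λ Σ_{i<N} ((x−1)^i/i!) u^{(i+1)}(1) = f` on `[0,1]`
with `u(1) = 0`. -/
def ShiftedODE (κ : ℝ) (s : ℂ) (N : ℕ) (lam : ℝ) (u f : ℝ → ℂ) : Prop :=
  (∀ x ∈ Set.Icc (0:ℝ) 1,
      deriv (fun y : ℝ => ((κ * y + y ^ 2 : ℝ) : ℂ) * deriv u y) x + s * deriv u x
        - (N : ℂ) * ((N : ℂ) + 1) * u x
        + (lam : ℂ) * ∑ i ∈ Finset.range N,
            ((x : ℂ) - 1) ^ i / (i.factorial : ℂ) * iteratedDeriv (i + 1) u 1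
        = f x)
    ∧ u 1 = 0

/-- The operator `L_s u = (x² u')' + s u' − W u`. -/
def Lop (W : ℝ → ℝ) (s : ℂ) (u : ℝ → ℂ) : ℝ → ℂ := fun x =>
  deriv (fun y : ℝ => ((y ^ 2 : ℝ) : ℂ) * deriv u y) x + s * deriv u x - (W x : ℂ) * u x

/-- `Ω¹_σ`. -/
def Omega1 (σ : ℝ) : Set ℂ :=
  {s | s.re ≤ 0 ∧ σ < |s.im|} ∪ {s | 0 < s.re ∧ σ < ‖s‖}

/-- `Ω²_σ`. -/
def Omega2 (σ : ℝ) : Set ℂ :=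
  {s | σ < ‖s‖ + s.re ∧ -s.re * ‖s‖ / (2 * (‖s‖ + s.re)) < σ}

/-- `Ω³_σ`. -/
def Omega3 (σ : ℝ) : Set ℂ :=
  {s | s ≠ 0 ∧
    0 < σ * (‖s‖ - σ + s.re) - (σ * (1 + s.re / ‖s‖) + s.re / 2) ^ 2}

/-- `Ω_σ = Ω¹_σ ∩ (Ω²_σ ∪ Ω³_σ)`. -/
def Omega (σ : ℝ) : Set ℂ := Omega1 σ ∩ (Omega2 σ ∪ Omega3 σ)

/-- The constant `C_{s,σ}`: `|Im s| − σ` when `Re s ≤ 0`, and `|s| − σ` when `Re s > 0`. -/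
def Csig (s : ℂ) (σ : ℝ) : ℝ := if s.re ≤ 0 then |s.im| - σ else ‖s‖ - σ

namespace Stmt1Aux
open Finset

def wB (σ : ℝ) (k l : ℕ) (m : ℕ) : ℝ :=
  if m = 0 then 1
  else σ^(2*m)/((m.factorial:ℝ)^2*((m+1).factorial:ℝ)^2) * (m:ℝ)^(k+l)

def phiA (K θ τ : ℝ) (j : ℕ) : ℝ := K^2*(1-θ)⁻¹ * ((j:ℝ)+1)^3 * τ^j

def eTerm (σ : ℝ) (k l : ℕ) (u : ℝ → ℂ) (m : ℕ) : ℝ :=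
  wB σ k l m * ∫ x in (0:ℝ)..1, (x/σ)^k * ‖iteratedDeriv m u x‖^2

lemma eTerm_succ (σ : ℝ) (k l : ℕ) (u : ℝ → ℂ) (m : ℕ) :
    eTerm σ k l u (m+1) = gTerm σ k l u (m+1) := by
  rw [eTerm, wB, if_neg (Nat.succ_ne_zero m), gTerm]

lemma eTerm_zero (σ : ℝ) (k l : ℕ) (u : ℝ → ℂ) :
    eTerm σ k l u 0 = ∫ x in (0:ℝ)..1, (x/σ)^k * ‖u x‖^2 := by
  rw [eTerm, wB, if_pos rfl, one_mul]
  simp [iteratedDeriv_zero]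

lemma eTerm_zero_00 (σ : ℝ) (u : ℝ → ℂ) : eTerm σ 0 0 u 0 = gTerm σ 0 0 u 0 := by
  norm_num [eTerm, wB, gTerm, Nat.factorial]

lemma wB_nonneg (σ : ℝ) (hσ : 0 < σ) (k l m : ℕ) : 0 ≤ wB σ k l m := by
  rw [wB]; split
  · norm_num
  · positivity

lemma Iint_nonneg (σ : ℝ) (hσ : 0 < σ) (k : ℕ) (u : ℝ → ℂ) (m : ℕ) :
    0 ≤ ∫ x in (0:ℝ)..1, (x/σ)^k * ‖iteratedDeriv m u x‖^2 := by
  apply intervalIntegral.integral_nonneg (by norm_num)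
  intro x hx
  have hx0 : 0 ≤ x/σ := div_nonneg hx.1 hσ.le
  positivity

lemma eTerm_nonneg (σ : ℝ) (hσ : 0 < σ) (k l : ℕ) (u : ℝ → ℂ) (m : ℕ) :
    0 ≤ eTerm σ k l u m :=
  mul_nonneg (wB_nonneg σ hσ k l m) (Iint_nonneg σ hσ k u m)

lemma contin (σ : ℝ) (hσ : 0 < σ) (k : ℕ) (u : ℝ → ℂ) (hu : ContDiff ℝ (⊤:ℕ∞) u) (m : ℕ) :
    Continuous (fun x : ℝ => (x/σ)^k * ‖iteratedDeriv m u x‖^2) := by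
  have h1 : Continuous (iteratedDeriv m u) :=
    hu.continuous_iteratedDeriv m (by exact_mod_cast le_top)
  fun_prop

lemma cs_aux (θ : ℝ) (hθ : 0 < θ) (hθ1 : θ < 1) (N : ℕ) (c d : ℕ → ℝ) :
    (∑ j ∈ Finset.range N, c j * d j)^2 ≤
      (1-θ)⁻¹ * ∑ j ∈ Finset.range N, (θ^j)⁻¹ * (c j)^2 * (d j)^2 := by
  set η := Real.sqrt θ with hη
  have hη0 : 0 < η := Real.sqrt_pos.mpr hθ
  have hsq : ∀ j : ℕ, (η^j)^2 = θ^j := by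
    intro j; rw [← pow_mul, mul_comm, pow_mul, Real.sq_sqrt hθ.le]
  have key : (∑ j ∈ Finset.range N, c j * d j)
      = ∑ j ∈ Finset.range N, η^j * (c j * d j / η^j) := by
    refine Finset.sum_congr rfl fun j _ => ?_
    field_simp
  rw [key]
  refine (Finset.sum_mul_sq_le_sq_mul_sq (Finset.range N) (fun j => η^j)
    (fun j => c j * d j / η^j)).trans ?_
  have h1 : ∑ j ∈ Finset.range N, (η^j)^2 ≤ (1-θ)⁻¹ := by
    simp_rw [hsq]
    calc ∑ j ∈ Finset.range N, θ^j ≤ ∑' j : ℕ, θ^j :=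
          Summable.sum_le_tsum _ (fun i _ => by positivity) (summable_geometric_of_lt_one hθ.le hθ1)
      _ = (1-θ)⁻¹ := tsum_geometric_of_lt_one hθ.le hθ1
  have h2 : ∑ j ∈ Finset.range N, (c j * d j / η^j)^2
      = ∑ j ∈ Finset.range N, (θ^j)⁻¹ * (c j)^2 * (d j)^2 := by
    refine Finset.sum_congr rfl fun j _ => ?_
    rw [div_pow, hsq]
    field_simp
  rw [h2]
  exact mul_le_mul_of_nonneg_right h1 (Finset.sum_nonneg fun j _ => by positivity)

lemma nat1 (k l m j : ℕ) (hkl : k + l ≤ 3) (hm : 1 ≤ m) :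
    (m+j)^(k+l) ≤ (j+1)^3 * m^(k+l) := by
  calc (m+j)^(k+l) ≤ (m*(j+1))^(k+l) := Nat.pow_le_pow_left (by nlinarith) _
    _ = m^(k+l) * (j+1)^(k+l) := mul_pow _ _ _
    _ ≤ m^(k+l) * (j+1)^3 := Nat.mul_le_mul_left _ (Nat.pow_le_pow_right (by omega) hkl)
    _ = (j+1)^3 * m^(k+l) := Nat.mul_comm _ _

lemma nat2 (m j : ℕ) : j.factorial * (m+1).factorial ≤ (m+j+1).factorial := by
  have h := Nat.factorial_mul_factorial_dvd_factorial_add j (m+1)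
  have he : j + (m+1) = m + j + 1 := by omega
  rw [he] at h
  exact Nat.le_of_dvd (Nat.factorial_pos _) h

lemma nat3 (k l m j : ℕ) (hkl : k + l ≤ 3) (hm : 1 ≤ m) :
    (m+j)^(k+l) * (j.factorial)^2 * ((m.factorial)^2 * ((m+1).factorial)^2)
      ≤ (j+1)^3 * m^(k+l) * (((m+j+1).factorial)^2 * (m.factorial)^2) := by
  calc (m+j)^(k+l) * (j.factorial)^2 * ((m.factorial)^2 * ((m+1).factorial)^2)
      = (m+j)^(k+l) * (j.factorial * (m+1).factorial)^2 * (m.factorial)^2 := by ring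
    _ ≤ ((j+1)^3 * m^(k+l)) * ((m+j+1).factorial)^2 * (m.factorial)^2 :=
        Nat.mul_le_mul (Nat.mul_le_mul (nat1 k l m j hkl hm)
          (Nat.pow_le_pow_left (nat2 m j) 2)) le_rfl
    _ = (j+1)^3 * m^(k+l) * (((m+j+1).factorial)^2 * (m.factorial)^2) := by ring

lemma nat4 (k l j : ℕ) (hkl : k + l ≤ 3) :
    j^(k+l) * (j.factorial)^2 ≤ (j+1)^3 * ((j+1).factorial)^2 := by
  have h1 : j^(k+l) ≤ (j+1)^3 := by
    calc j^(k+l) ≤ (j+1)^(k+l) := Nat.pow_le_pow_left (by omega) _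
      _ ≤ (j+1)^3 := Nat.pow_le_pow_right (by omega) hkl
  exact Nat.mul_le_mul h1 (Nat.pow_le_pow_left (Nat.factorial_le (by omega)) 2)

lemma coef_le (σ σ' θ τ K : ℝ) (hσ : 0 < σ) (hσ' : 0 < σ')
    (hθ : 0 < θ) (hθ1 : θ < 1) (hτ : τ = σ^2/(σ'^2*θ)) (hK : 0 < K)
    (k l : ℕ) (hkl : k + l ≤ 3) (n j : ℕ) (hj : j ≤ n) :
    σ^(2*n)/((n.factorial:ℝ)^2*((n+1).factorial:ℝ)^2) * (n:ℝ)^(k+l) *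
        ((1-θ)⁻¹ * ((θ^j)⁻¹ * ((n.choose j:ℝ) * (K * (j.factorial:ℝ)^2 / σ'^j))^2))
      ≤ phiA K θ τ j * wB σ k l (n-j) := by
  obtain ⟨m, rfl⟩ : ∃ m, n = m + j := ⟨n - j, (Nat.sub_add_cancel hj).symm⟩
  have hmj : m + j - j = m := by omega
  rw [hmj, phiA]
  have hθ' : (1:ℝ) - θ > 0 := by linarith
  have hτ0 : 0 < τ := by rw [hτ]; positivity
  have hF : (0:ℝ) ≤ K^2*(1-θ)⁻¹*τ^j*σ^(2*m) := by positivity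
  have hfj : ((j.factorial:ℝ)) ≠ 0 := by exact_mod_cast j.factorial_ne_zero
  have hfm : ((m.factorial:ℝ)) ≠ 0 := by exact_mod_cast m.factorial_ne_zero
  have hfmj : (((m+j).factorial:ℝ)) ≠ 0 := by exact_mod_cast (m+j).factorial_ne_zero
  have hfmj1 : (((m+j+1).factorial:ℝ)) ≠ 0 := by exact_mod_cast (m+j+1).factorial_ne_zero
  have I1 : σ^(2*(m+j))/(((m+j).factorial:ℝ)^2*(((m+j)+1).factorial:ℝ)^2) * ((m+j:ℕ):ℝ)^(k+l) *
        ((1-θ)⁻¹ * ((θ^j)⁻¹ * (((m+j).choose j:ℝ) * (K * (j.factorial:ℝ)^2 / σ'^j))^2))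
      = (K^2*(1-θ)⁻¹*τ^j*σ^(2*m)) *
        (((m+j:ℕ):ℝ)^(k+l) * (j.factorial:ℝ)^2 /
          (((m+j+1).factorial:ℝ)^2 * (m.factorial:ℝ)^2)) := by
    rw [Nat.cast_choose ℝ (by omega : j ≤ m + j), hτ]
    rw [show m + j - j = m from by omega]
    have hθn : θ ≠ 0 := hθ.ne'
    have hσn : σ' ≠ 0 := hσ'.ne'
    field_simp
    have e1 : θ ^ j * θ⁻¹ ^ j = 1 := by rw [← mul_pow, mul_inv_cancel₀ hθn, one_pow]
    have e2 : σ' ^ (j*2) * σ'⁻¹ ^ (j*2) = 1 := by rw [← mul_pow, mul_inv_cancel₀ hσn, one_pow]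
    linear_combination (-(σ ^ (m * 2) * σ ^ (j * 2) * ((m + j:ℕ):ℝ) ^ k * ((m + j:ℕ):ℝ) ^ l)
      * σ' ^ (j*2) * σ'⁻¹ ^ (j*2)) * e1
      - (σ ^ (m * 2) * σ ^ (j * 2) * ((m + j:ℕ):ℝ) ^ k * ((m + j:ℕ):ℝ) ^ l) * e2
  rw [I1]
  rcases Nat.eq_zero_or_pos m with rfl | hm
  · rw [wB, if_pos rfl, mul_one]
    have I2 : K^2*(1-θ)⁻¹ * ((j:ℝ)+1)^3 * τ^j
        = (K^2*(1-θ)⁻¹*τ^j*σ^(2*0)) * ((j:ℝ)+1)^3 := by ring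
    rw [I2]
    refine mul_le_mul_of_nonneg_left ?_ hF
    rw [div_le_iff₀ (by positivity)]
    simp only [Nat.zero_add, Nat.factorial_zero]
    push_cast
    calc ((j:ℝ))^(k+l) * (j.factorial:ℝ)^2 ≤ ((j:ℝ)+1)^3 * ((j+1).factorial:ℝ)^2 := by
          exact_mod_cast nat4 k l j hkl
      _ = ((j:ℝ)+1)^3 * (((j+1).factorial:ℝ)^2 * (1:ℝ)^2) := by ring
  · rw [wB, if_neg hm.ne']
    have I2 : K^2*(1-θ)⁻¹ * ((j:ℝ)+1)^3 * τ^j *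
          (σ^(2*m)/((m.factorial:ℝ)^2*((m+1).factorial:ℝ)^2) * (m:ℝ)^(k+l))
        = (K^2*(1-θ)⁻¹*τ^j*σ^(2*m)) *
          ((((j:ℝ)+1)^3 * (m:ℝ)^(k+l)) / ((m.factorial:ℝ)^2*((m+1).factorial:ℝ)^2)) := by
      ring
    rw [I2]
    refine mul_le_mul_of_nonneg_left ?_ hF
    rw [div_le_div_iff₀ (by positivity) (by positivity)]
    have h3 := nat3 k l m j hkl hm
    push_cast
    exact_mod_cast h3

lemma integral_bound (σ σ' θ K : ℝ) (hσ : 0 < σ) (hσ' : 0 < σ') (hθ : 0 < θ) (hθ1 : θ < 1)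
    (hK : 0 < K) (k : ℕ) (f u : ℝ → ℂ)
    (hf : ContDiff ℝ (⊤:ℕ∞) f) (hu : ContDiff ℝ (⊤:ℕ∞) u)
    (hfB : ∀ j : ℕ, ∀ x ∈ Icc (0:ℝ) 1, ‖iteratedDeriv j f x‖ ≤ K * (j.factorial:ℝ)^2/σ'^j)
    (n : ℕ) :
    (∫ x in (0:ℝ)..1, (x/σ)^k * ‖iteratedDeriv n (fun y => f y * u y) x‖^2)
      ≤ ∑ j ∈ Finset.range (n+1),
          ((1-θ)⁻¹ * ((θ^j)⁻¹ * ((n.choose j:ℝ) * (K * (j.factorial:ℝ)^2/σ'^j))^2)) *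
          ∫ x in (0:ℝ)..1, (x/σ)^k * ‖iteratedDeriv (n-j) u x‖^2 := by
  have hfu : ContDiff ℝ (⊤:ℕ∞) (fun y => f y * u y) := hf.mul hu
  have key : ∀ x ∈ Icc (0:ℝ) 1,
      (x/σ)^k * ‖iteratedDeriv n (fun y => f y * u y) x‖^2
        ≤ ∑ j ∈ Finset.range (n+1),
            ((1-θ)⁻¹ * ((θ^j)⁻¹ * ((n.choose j:ℝ) * (K * (j.factorial:ℝ)^2/σ'^j))^2)) *
            ((x/σ)^k * ‖iteratedDeriv (n-j) u x‖^2) := by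
    intro x hx
    have hx0 : 0 ≤ x/σ := div_nonneg hx.1 hσ.le
    have hL : ‖iteratedDeriv n (fun y => f y * u y) x‖ ≤ ∑ j ∈ Finset.range (n+1),
        (n.choose j : ℝ) * ‖iteratedDeriv j f x‖ * ‖iteratedDeriv (n-j) u x‖ := by
      have := norm_iteratedFDeriv_mul_le (𝕜 := ℝ) hf hu x (n := n) (by exact_mod_cast le_top)
      simpa [norm_iteratedFDeriv_eq_norm_iteratedDeriv] using this
    have hL2 : ‖iteratedDeriv n (fun y => f y * u y) x‖ ≤ ∑ j ∈ Finset.range (n+1),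
        ((n.choose j : ℝ) * (K * (j.factorial:ℝ)^2/σ'^j)) * ‖iteratedDeriv (n-j) u x‖ := by
      refine hL.trans (Finset.sum_le_sum fun j _ => ?_)
      have hb := hfB j x hx
      have h2 : (0:ℝ) ≤ (n.choose j : ℝ) := by positivity
      have h3 : (0:ℝ) ≤ ‖iteratedDeriv (n-j) u x‖ := norm_nonneg _
      calc (n.choose j : ℝ) * ‖iteratedDeriv j f x‖ * ‖iteratedDeriv (n-j) u x‖
          ≤ (n.choose j : ℝ) * (K * (j.factorial:ℝ)^2/σ'^j) * ‖iteratedDeriv (n-j) u x‖ := by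
            apply mul_le_mul_of_nonneg_right _ h3
            exact mul_le_mul_of_nonneg_left hb h2
        _ = _ := by ring
    have hsq : ‖iteratedDeriv n (fun y => f y * u y) x‖^2 ≤
        (∑ j ∈ Finset.range (n+1),
          ((n.choose j : ℝ) * (K * (j.factorial:ℝ)^2/σ'^j)) * ‖iteratedDeriv (n-j) u x‖)^2 :=
      pow_le_pow_left₀ (norm_nonneg _) hL2 2
    have hcs := cs_aux θ hθ hθ1 (n+1)
      (fun j => (n.choose j : ℝ) * (K * (j.factorial:ℝ)^2/σ'^j))
      (fun j => ‖iteratedDeriv (n-j) u x‖)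
    have hcomb := hsq.trans hcs
    calc (x/σ)^k * ‖iteratedDeriv n (fun y => f y * u y) x‖^2
        ≤ (x/σ)^k * ((1-θ)⁻¹ * ∑ j ∈ Finset.range (n+1),
            (θ^j)⁻¹ * ((n.choose j : ℝ) * (K * (j.factorial:ℝ)^2/σ'^j))^2 *
              ‖iteratedDeriv (n-j) u x‖^2) :=
          mul_le_mul_of_nonneg_left hcomb (by positivity)
      _ = _ := by
          rw [Finset.mul_sum, Finset.mul_sum]
          refine Finset.sum_congr rfl fun j _ => by ring
  have hint1 : IntervalIntegrable
      (fun x : ℝ => (x/σ)^k * ‖iteratedDeriv n (fun y => f y * u y) x‖^2)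
      MeasureTheory.volume 0 1 := (contin σ hσ k _ hfu n).intervalIntegrable 0 1
  have hint2 : IntervalIntegrable (fun x : ℝ => ∑ j ∈ Finset.range (n+1),
      ((1-θ)⁻¹ * ((θ^j)⁻¹ * ((n.choose j:ℝ) * (K * (j.factorial:ℝ)^2/σ'^j))^2)) *
      ((x/σ)^k * ‖iteratedDeriv (n-j) u x‖^2)) MeasureTheory.volume 0 1 := by
    apply Continuous.intervalIntegrable
    exact continuous_finset_sum _ fun j _ => continuous_const.mul (contin σ hσ k u hu (n-j))
  calc (∫ x in (0:ℝ)..1, (x/σ)^k * ‖iteratedDeriv n (fun y => f y * u y) x‖^2)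
      ≤ ∫ x in (0:ℝ)..1, ∑ j ∈ Finset.range (n+1),
          ((1-θ)⁻¹ * ((θ^j)⁻¹ * ((n.choose j:ℝ) * (K * (j.factorial:ℝ)^2/σ'^j))^2)) *
          ((x/σ)^k * ‖iteratedDeriv (n-j) u x‖^2) :=
        intervalIntegral.integral_mono_on (by norm_num) hint1 hint2 key
    _ = _ := by
        rw [intervalIntegral.integral_finset_sum]
        · exact Finset.sum_congr rfl fun j _ => intervalIntegral.integral_const_mul _ _
        · exact fun j _ => (continuous_const.mul (contin σ hσ k u hu (n-j))).intervalIntegrable 0 1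

lemma per_n (σ σ' θ τ K : ℝ) (hσ : 0 < σ) (hσ' : 0 < σ') (hθ : 0 < θ) (hθ1 : θ < 1)
    (hτ : τ = σ^2/(σ'^2*θ)) (hK : 0 < K) (k l : ℕ) (hkl : k + l ≤ 3) (f u : ℝ → ℂ)
    (hf : ContDiff ℝ (⊤:ℕ∞) f) (hu : ContDiff ℝ (⊤:ℕ∞) u)
    (hfB : ∀ j : ℕ, ∀ x ∈ Icc (0:ℝ) 1, ‖iteratedDeriv j f x‖ ≤ K * (j.factorial:ℝ)^2/σ'^j)
    (n : ℕ) :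
    gTerm σ k l (fun x => f x * u x) n
      ≤ ∑ j ∈ Finset.range (n+1), phiA K θ τ j * eTerm σ k l u (n-j) := by
  have h := integral_bound σ σ' θ K hσ hσ' hθ hθ1 hK k f u hf hu hfB n
  have hW : (0:ℝ) ≤ σ^(2*n)/((n.factorial:ℝ)^2*((n+1).factorial:ℝ)^2) * (n:ℝ)^(k+l) := by
    positivity
  rw [gTerm]
  calc σ^(2*n)/((n.factorial:ℝ)^2*((n+1).factorial:ℝ)^2) * (n:ℝ)^(k+l) *
        ∫ x in (0:ℝ)..1, (x/σ)^k * ‖iteratedDeriv n (fun x => f x * u x) x‖^2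
      ≤ σ^(2*n)/((n.factorial:ℝ)^2*((n+1).factorial:ℝ)^2) * (n:ℝ)^(k+l) *
        ∑ j ∈ Finset.range (n+1),
          ((1-θ)⁻¹ * ((θ^j)⁻¹ * ((n.choose j:ℝ) * (K * (j.factorial:ℝ)^2/σ'^j))^2)) *
          ∫ x in (0:ℝ)..1, (x/σ)^k * ‖iteratedDeriv (n-j) u x‖^2 :=
        mul_le_mul_of_nonneg_left h hW
    _ ≤ ∑ j ∈ Finset.range (n+1), phiA K θ τ j * eTerm σ k l u (n-j) := by
        rw [Finset.mul_sum]
        refine Finset.sum_le_sum fun j hj => ?_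
        have hc := coef_le σ σ' θ τ K hσ hσ' hθ hθ1 hτ hK k l hkl n j
          (Finset.mem_range_succ_iff.mp hj)
        have hI := Iint_nonneg σ hσ k u (n-j)
        refine le_trans (le_of_eq (by ring)) (le_trans
          (mul_le_mul_of_nonneg_right hc hI) (le_of_eq ?_))
        rw [eTerm]
        ring

lemma tsum_cauchy_le (a b : ℕ → ℝ≥0∞) :
    ∑' n : ℕ, ∑ j ∈ Finset.range (n+1), a j * b (n-j) ≤ (∑' j : ℕ, a j) * ∑' m : ℕ, b m := by
  have h1 : ∀ n : ℕ, ∑ j ∈ Finset.range (n+1), a j * b (n-j)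
      = ∑' j : ℕ, (if j ≤ n then a j * b (n-j) else 0) := by
    intro n
    rw [tsum_eq_sum (s := Finset.range (n+1)) (fun j hj => by
      rw [if_neg]; intro h; exact hj (Finset.mem_range_succ_iff.mpr h))]
    exact Finset.sum_congr rfl fun j hj => (if_pos (Finset.mem_range_succ_iff.mp hj)).symm
  simp_rw [h1]
  rw [ENNReal.tsum_comm]
  have h2 : ∀ j : ℕ, (∑' n : ℕ, if j ≤ n then a j * b (n-j) else 0) = a j * ∑' m : ℕ, b m := by
    intro j
    rw [← ENNReal.tsum_mul_left]
    refine (Function.Injective.tsum_eq (g := fun m : ℕ => m + j)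
      (add_left_injective j) ?_).symm.trans ?_
    · intro x hx
      rcases le_or_gt j x with h | h
      · exact ⟨x - j, by simp only []; omega⟩
      · simp only [Function.mem_support, ne_eq, not_not] at hx ⊢
        exact absurd (if_neg (by omega)) hx
    · apply tsum_congr
      intro m
      rw [if_pos (by omega), Nat.add_sub_cancel]
  exact le_of_eq ((tsum_congr h2).trans ENNReal.tsum_mul_right)

lemma phiA_nonneg (K θ τ : ℝ) (hθ1 : θ < 1) (hτ0 : 0 < τ) (j : ℕ) : 0 ≤ phiA K θ τ j := by
  rw [phiA]
  have h1 : (0:ℝ) < 1 - θ := by linarith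
  positivity

set_option maxHeartbeats 1000000 in
lemma phiA_summable (K θ τ : ℝ) (hτ0 : 0 < τ) (hτ1 : τ < 1) : Summable (phiA K θ τ) := by
  have h1 : Summable (fun n : ℕ => (n:ℝ)^3 * τ^n) :=
    summable_pow_mul_geometric_of_norm_lt_one 3
      (by rw [Real.norm_eq_abs, abs_of_pos hτ0]; exact hτ1)
  have h2 : Summable (fun j : ℕ => ((j+1:ℕ):ℝ)^3 * τ^(j+1)) := (summable_nat_add_iff 1).mpr h1
  have h3 := h2.mul_left (K^2*(1-θ)⁻¹ * τ⁻¹)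
  refine h3.congr fun j => ?_
  rw [phiA]
  generalize (1-θ)⁻¹ = c
  push_cast
  field_simp [hτ0.ne']
  ring

end Stmt1Aux


/-- If `0 < σ < σ'`, `k ∈ {0,1,2}`, `l ∈ {0,1}` and `f` is `(σ',2)`-Gevrey,
then there is `C > 0` (depending only on `σ, σ', k, l, f`) such that for every smooth `u`
with `‖u‖_{σ,k,l} < ∞` one has `‖f·u‖_{σ,k,l} ≤ C ‖u‖_{σ,k,l}` (in particular it is finite). -/
theorem statement1 (σ σ' : ℝ) (hσ : 0 < σ) (hσσ' : σ < σ') (k l : ℕ) (hk : k ≤ 2) (hl : l ≤ 1)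
    (f : ℝ → ℂ) (hf : ContDiff ℝ (⊤ : ℕ∞) f) (hfG : IsGevrey2 σ' f) :
    ∃ C : ℝ, 0 < C ∧ ∀ u : ℝ → ℂ, ContDiff ℝ (⊤ : ℕ∞) u → gnorm σ k l u ≠ ⊤ →
      gnorm σ k l (fun x => f x * u x) ≠ ⊤ ∧
      gnorm σ k l (fun x => f x * u x) ≤ ENNReal.ofReal C * gnorm σ k l u := by
  classical
  open Stmt1Aux in
  obtain ⟨K, hK, hKb⟩ := hfG
  have hσ' : 0 < σ' := hσ.trans hσσ'
  have hkl3 : k + l ≤ 3 := by omega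
  have hρ0 : 0 < σ/σ' := by positivity
  have hρ1 : σ/σ' < 1 := (div_lt_one hσ').mpr hσσ'
  have hθ0 : 0 < Real.sqrt (σ/σ') := Real.sqrt_pos.mpr hρ0
  have hθ1 : Real.sqrt (σ/σ') < 1 := by
    rw [show (1:ℝ) = Real.sqrt 1 from Real.sqrt_one.symm]
    exact Real.sqrt_lt_sqrt hρ0.le hρ1
  set θ := Real.sqrt (σ/σ') with hθdef
  have hτ0 : 0 < σ^2/(σ'^2*θ) := by positivity
  have hτ1 : σ^2/(σ'^2*θ) < 1 := by
    rw [div_lt_one (by positivity)]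
    have h1 : (σ/σ')^2 < θ := by
      rw [hθdef]
      refine (Real.lt_sqrt (by positivity)).mpr ?_
      have h2 : (σ/σ')^2 < σ/σ' := by nlinarith
      have h3 : ((σ/σ')^2)^2 < (σ/σ')^2 := by nlinarith
      exact h3.trans h2
    calc σ^2 = (σ/σ')^2 * σ'^2 := by field_simp
      _ < θ * σ'^2 := mul_lt_mul_of_pos_right h1 (by positivity)
      _ = σ'^2 * θ := mul_comm _ _
  set τ := σ^2/(σ'^2*θ) with hτdef
  have hphisum := phiA_summable K θ τ hτ0 hτ1
  have hphi0 : ∀ j, 0 ≤ phiA K θ τ j := phiA_nonneg K θ τ hθ1 hτ0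
  set Φr := ∑' j, phiA K θ τ j with hΦrdef
  have hΦr0 : 0 ≤ Φr := tsum_nonneg hphi0
  have hofphi : ∑' j, ENNReal.ofReal (phiA K θ τ j) = ENNReal.ofReal Φr :=
    (ENNReal.ofReal_tsum_of_nonneg hphi0 hphisum).symm
  have hC0 : 0 < Φr^(1/2:ℝ) + K + 1 := by positivity
  refine ⟨Φr^(1/2:ℝ) + K + 1, hC0, fun u hu hgu => ?_⟩
  have hfB : ∀ j : ℕ, ∀ x ∈ Icc (0:ℝ) 1, ‖iteratedDeriv j f x‖ ≤ K * (j.factorial:ℝ)^2/σ'^j :=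
    hKb
  have hpern := per_n σ σ' θ τ K hσ hσ' hθ0 hθ1 hτdef hK k l hkl3 f u hf hu hfB
  have hterm : ∀ n, ENNReal.ofReal (gTerm σ k l (fun x => f x * u x) n)
      ≤ ∑ j ∈ Finset.range (n+1),
          ENNReal.ofReal (phiA K θ τ j) * ENNReal.ofReal (eTerm σ k l u (n-j)) := by
    intro n
    calc ENNReal.ofReal (gTerm σ k l (fun x => f x * u x) n)
        ≤ ENNReal.ofReal (∑ j ∈ Finset.range (n+1), phiA K θ τ j * eTerm σ k l u (n-j)) :=
          ENNReal.ofReal_le_ofReal (hpern n)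
      _ = ∑ j ∈ Finset.range (n+1), ENNReal.ofReal (phiA K θ τ j * eTerm σ k l u (n-j)) :=
          ENNReal.ofReal_sum_of_nonneg
            (fun j _ => mul_nonneg (hphi0 j) (eTerm_nonneg σ hσ k l u _))
      _ = _ := Finset.sum_congr rfl fun j _ => ENNReal.ofReal_mul (hphi0 j)
  have hT : (∑' n, ENNReal.ofReal (gTerm σ k l (fun x => f x * u x) n))
      ≤ ENNReal.ofReal Φr * ∑' m, ENNReal.ofReal (eTerm σ k l u m) := by
    calc (∑' n, ENNReal.ofReal (gTerm σ k l (fun x => f x * u x) n))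
        ≤ ∑' n, ∑ j ∈ Finset.range (n+1),
            ENNReal.ofReal (phiA K θ τ j) * ENNReal.ofReal (eTerm σ k l u (n-j)) :=
          ENNReal.tsum_le_tsum hterm
      _ ≤ (∑' j, ENNReal.ofReal (phiA K θ τ j)) * ∑' m, ENNReal.ofReal (eTerm σ k l u m) :=
          tsum_cauchy_le _ _
      _ = _ := by rw [hofphi]
  have hfsem : ∀ v : ℝ → ℂ, fsem σ k l 0 v
      = (∑' n, ENNReal.ofReal (gTerm σ k l v n)) ^ (1/2:ℝ) := by
    intro v; rw [fsem]; congr 1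
  have hhalfmul : ∀ X : ℝ≥0∞, X^(1/2:ℝ) * X^(1/2:ℝ) = X := by
    intro X
    rw [← ENNReal.rpow_add_of_nonneg (1/2) (1/2) (by norm_num) (by norm_num)]
    norm_num
  have hGhalf : ∀ G : ℝ≥0∞, (G*G)^(1/2:ℝ) = G := by
    intro G
    rw [ENNReal.mul_rpow_of_nonneg _ _ (by norm_num : (0:ℝ) ≤ 1/2)]
    exact hhalfmul G
  by_cases hkl0 : k = 0 ∧ l = 0
  · obtain ⟨rfl, rfl⟩ := hkl0
    have hG : gnorm σ 0 0 u = (∑' n, ENNReal.ofReal (gTerm σ 0 0 u n)) ^ (1/2:ℝ) := by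
      rw [gnorm, if_pos ⟨rfl, rfl⟩, hfsem]
    have hGfu : gnorm σ 0 0 (fun x => f x * u x)
        = (∑' n, ENNReal.ofReal (gTerm σ 0 0 (fun x => f x * u x) n)) ^ (1/2:ℝ) := by
      rw [gnorm, if_pos ⟨rfl, rfl⟩, hfsem]
    have heq : ∀ m, eTerm σ 0 0 u m = gTerm σ 0 0 u m := by
      intro m
      cases m with
      | zero => exact eTerm_zero_00 σ u
      | succ m => exact eTerm_succ σ 0 0 u m
    have hEb : (∑' m, ENNReal.ofReal (eTerm σ 0 0 u m))
        = ∑' n, ENNReal.ofReal (gTerm σ 0 0 u n) := tsum_congr fun m => by rw [heq m]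
    have hSS : (∑' n, ENNReal.ofReal (gTerm σ 0 0 u n)) = gnorm σ 0 0 u * gnorm σ 0 0 u := by
      rw [hG, hhalfmul]
    have hbound : gnorm σ 0 0 (fun x => f x * u x)
        ≤ ENNReal.ofReal (Φr^(1/2:ℝ)) * gnorm σ 0 0 u := by
      rw [hGfu]
      calc (∑' n, ENNReal.ofReal (gTerm σ 0 0 (fun x => f x * u x) n)) ^ (1/2:ℝ)
          ≤ (ENNReal.ofReal Φr * (gnorm σ 0 0 u * gnorm σ 0 0 u)) ^ (1/2:ℝ) := by
            refine ENNReal.rpow_le_rpow ?_ (by norm_num)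
            rw [← hSS, ← hEb]
            exact hT
        _ = (ENNReal.ofReal Φr) ^ (1/2:ℝ) * gnorm σ 0 0 u := by
            rw [ENNReal.mul_rpow_of_nonneg _ _ (by norm_num : (0:ℝ) ≤ 1/2), hGhalf]
        _ = ENNReal.ofReal (Φr^(1/2:ℝ)) * gnorm σ 0 0 u := by
            rw [ENNReal.ofReal_rpow_of_nonneg hΦr0 (by norm_num)]
    have hfin : gnorm σ 0 0 (fun x => f x * u x)
        ≤ ENNReal.ofReal (Φr^(1/2:ℝ)+K+1) * gnorm σ 0 0 u :=
      hbound.trans (mul_le_mul_left (ENNReal.ofReal_le_ofReal (by linarith)) _)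
    exact ⟨ne_top_of_le_ne_top (ENNReal.mul_ne_top ENNReal.ofReal_ne_top hgu) hfin, hfin⟩
  · have hG : gnorm σ k l u = fsem σ k l 0 u +
        ENNReal.ofReal (Real.sqrt (∫ x in (0:ℝ)..1, (x/σ)^k * ‖u x‖^2)) := by
      rw [gnorm, if_neg hkl0]
    have hJ0 : 0 ≤ ∫ x in (0:ℝ)..1, (x/σ)^k * ‖u x‖^2 := by
      rw [← eTerm_zero σ k l u]
      exact eTerm_nonneg σ hσ k l u 0
    have habsq : ∀ a b : ℝ≥0∞, a*a + b*b ≤ (a+b)*(a+b) := by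
      intro a b
      calc a*a + b*b ≤ a*(a+b) + b*(a+b) :=
            add_le_add (mul_le_mul_right le_self_add a) (mul_le_mul_right le_add_self b)
        _ = (a+b)*(a+b) := (add_mul a b (a+b)).symm
    have hEb : (∑' m, ENNReal.ofReal (eTerm σ k l u m)) ≤ gnorm σ k l u * gnorm σ k l u := by
      have h1 : ∀ m, ENNReal.ofReal (eTerm σ k l u m) ≤ ENNReal.ofReal (gTerm σ k l u m) +
          (if m = 0 then ENNReal.ofReal (∫ x in (0:ℝ)..1, (x/σ)^k * ‖u x‖^2) else 0) := by
        intro m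
        cases m with
        | zero =>
            rw [eTerm_zero σ k l u, if_pos rfl]
            exact le_add_self
        | succ m =>
            rw [eTerm_succ, if_neg (Nat.succ_ne_zero m), add_zero]
      calc (∑' m, ENNReal.ofReal (eTerm σ k l u m))
          ≤ ∑' m, (ENNReal.ofReal (gTerm σ k l u m) +
              (if m = 0 then ENNReal.ofReal (∫ x in (0:ℝ)..1, (x/σ)^k * ‖u x‖^2) else 0)) :=
            ENNReal.tsum_le_tsum h1
        _ = (∑' m, ENNReal.ofReal (gTerm σ k l u m)) +
              ∑' m : ℕ, (if m = 0 then
                ENNReal.ofReal (∫ x in (0:ℝ)..1, (x/σ)^k * ‖u x‖^2) else 0) :=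
            ENNReal.tsum_add
        _ = (∑' m, ENNReal.ofReal (gTerm σ k l u m)) +
              ENNReal.ofReal (∫ x in (0:ℝ)..1, (x/σ)^k * ‖u x‖^2) := by
            rw [tsum_ite_eq 0 (fun _ => ENNReal.ofReal (∫ x in (0:ℝ)..1, (x/σ)^k * ‖u x‖^2))]
        _ ≤ gnorm σ k l u * gnorm σ k l u := by
            rw [hG, hfsem u]
            refine le_trans (le_of_eq ?_) (habsq _ _)
            rw [hhalfmul]
            congr 1
            rw [← ENNReal.ofReal_mul (Real.sqrt_nonneg _), Real.mul_self_sqrt hJ0]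
    have hfufsem : fsem σ k l 0 (fun x => f x * u x)
        ≤ ENNReal.ofReal (Φr^(1/2:ℝ)) * gnorm σ k l u := by
      rw [hfsem]
      calc (∑' n, ENNReal.ofReal (gTerm σ k l (fun x => f x * u x) n)) ^ (1/2:ℝ)
          ≤ (ENNReal.ofReal Φr * (gnorm σ k l u * gnorm σ k l u)) ^ (1/2:ℝ) :=
            ENNReal.rpow_le_rpow (hT.trans (mul_le_mul_right hEb _)) (by norm_num)
        _ = ENNReal.ofReal (Φr^(1/2:ℝ)) * gnorm σ k l u := by
            rw [ENNReal.mul_rpow_of_nonneg _ _ (by norm_num : (0:ℝ) ≤ 1/2), hGhalf,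
              ENNReal.ofReal_rpow_of_nonneg hΦr0 (by norm_num)]
    have hf0 : ∀ x ∈ Icc (0:ℝ) 1, ‖f x‖ ≤ K := by
      intro x hx
      have := hKb 0 x hx
      simpa using this
    have hJfu : (∫ x in (0:ℝ)..1, (x/σ)^k * ‖f x * u x‖^2)
        ≤ K^2 * ∫ x in (0:ℝ)..1, (x/σ)^k * ‖u x‖^2 := by
      have hcf : Continuous f := hf.continuous
      have hcu : Continuous u := hu.continuous
      have hptw : ∀ x ∈ Icc (0:ℝ) 1,
          (x/σ)^k * ‖f x * u x‖^2 ≤ K^2 * ((x/σ)^k * ‖u x‖^2) := by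
        intro x hx
        have hx0 : 0 ≤ x/σ := div_nonneg hx.1 hσ.le
        have h1 : ‖f x * u x‖ ≤ K * ‖u x‖ := by
          rw [norm_mul]
          exact mul_le_mul_of_nonneg_right (hf0 x hx) (norm_nonneg _)
        have h2 : ‖f x * u x‖^2 ≤ (K*‖u x‖)^2 := pow_le_pow_left₀ (norm_nonneg _) h1 2
        calc (x/σ)^k * ‖f x * u x‖^2 ≤ (x/σ)^k * (K*‖u x‖)^2 :=
              mul_le_mul_of_nonneg_left h2 (by positivity)
          _ = K^2 * ((x/σ)^k * ‖u x‖^2) := by ring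
      have hi1 : IntervalIntegrable (fun x : ℝ => (x/σ)^k * ‖f x * u x‖^2)
          MeasureTheory.volume 0 1 := by
        apply Continuous.intervalIntegrable; fun_prop
      have hi2 : IntervalIntegrable (fun x : ℝ => K^2 * ((x/σ)^k * ‖u x‖^2))
          MeasureTheory.volume 0 1 := by
        apply Continuous.intervalIntegrable; fun_prop
      calc (∫ x in (0:ℝ)..1, (x/σ)^k * ‖f x * u x‖^2)
          ≤ ∫ x in (0:ℝ)..1, K^2 * ((x/σ)^k * ‖u x‖^2) :=
            intervalIntegral.integral_mono_on (by norm_num) hi1 hi2 hptw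
        _ = K^2 * ∫ x in (0:ℝ)..1, (x/σ)^k * ‖u x‖^2 :=
            intervalIntegral.integral_const_mul _ _
    have hsqrt : Real.sqrt (∫ x in (0:ℝ)..1, (x/σ)^k * ‖f x * u x‖^2)
        ≤ K * Real.sqrt (∫ x in (0:ℝ)..1, (x/σ)^k * ‖u x‖^2) := by
      calc Real.sqrt (∫ x in (0:ℝ)..1, (x/σ)^k * ‖f x * u x‖^2)
          ≤ Real.sqrt (K^2 * ∫ x in (0:ℝ)..1, (x/σ)^k * ‖u x‖^2) := Real.sqrt_le_sqrt hJfu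
        _ = K * Real.sqrt (∫ x in (0:ℝ)..1, (x/σ)^k * ‖u x‖^2) := by
            rw [Real.sqrt_mul (sq_nonneg K), Real.sqrt_sq hK.le]
    have hcomp2 : ENNReal.ofReal (Real.sqrt (∫ x in (0:ℝ)..1, (x/σ)^k * ‖f x * u x‖^2))
        ≤ ENNReal.ofReal K * gnorm σ k l u := by
      calc ENNReal.ofReal (Real.sqrt (∫ x in (0:ℝ)..1, (x/σ)^k * ‖f x * u x‖^2))
          ≤ ENNReal.ofReal (K * Real.sqrt (∫ x in (0:ℝ)..1, (x/σ)^k * ‖u x‖^2)) :=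
            ENNReal.ofReal_le_ofReal hsqrt
        _ = ENNReal.ofReal K *
              ENNReal.ofReal (Real.sqrt (∫ x in (0:ℝ)..1, (x/σ)^k * ‖u x‖^2)) :=
            ENNReal.ofReal_mul hK.le
        _ ≤ ENNReal.ofReal K * gnorm σ k l u := by
            refine mul_le_mul_right ?_ _
            rw [hG]
            exact le_add_self
    have hGfu : gnorm σ k l (fun x => f x * u x) = fsem σ k l 0 (fun x => f x * u x) +
        ENNReal.ofReal (Real.sqrt (∫ x in (0:ℝ)..1, (x/σ)^k * ‖f x * u x‖^2)) := by
      rw [gnorm, if_neg hkl0]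
    have htotal : gnorm σ k l (fun x => f x * u x)
        ≤ ENNReal.ofReal (Φr^(1/2:ℝ)+K+1) * gnorm σ k l u := by
      rw [hGfu]
      calc fsem σ k l 0 (fun x => f x * u x) +
            ENNReal.ofReal (Real.sqrt (∫ x in (0:ℝ)..1, (x/σ)^k * ‖f x * u x‖^2))
          ≤ ENNReal.ofReal (Φr^(1/2:ℝ)) * gnorm σ k l u + ENNReal.ofReal K * gnorm σ k l u :=
            add_le_add hfufsem hcomp2
        _ = (ENNReal.ofReal (Φr^(1/2:ℝ)) + ENNReal.ofReal K) * gnorm σ k l u :=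
            (add_mul _ _ _).symm
        _ ≤ ENNReal.ofReal (Φr^(1/2:ℝ)+K+1) * gnorm σ k l u := by
            refine mul_le_mul_left ?_ _
            rw [← ENNReal.ofReal_add (by positivity) hK.le]
            exact ENNReal.ofReal_le_ofReal (by linarith)
    exact ⟨ne_top_of_le_ne_top (ENNReal.mul_ne_top ENNReal.ofReal_ne_top hgu) htotal, htotal⟩
end
end

section
/- Let κ≥0, σ>0, λ∈ℝ, let N, M be integers with 0≤N≤M, and let s∈Ω^1_σ. Suppose u,f∈C^∞([0,1];ℂ) satisfy the shifted ODE with parameters (κ,s,N,λ). Then [u']_σ^{N,M} ≤ (1/C_{s,σ})·[f]_σ^{N,M}. -/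
noncomputable section

open Filter Set MeasureTheory
open scoped ENNReal Topology

section Statement6Aux


lemma seq_l2_bound (σ C : ℝ) (hσ : 0 < σ) (hC : 0 < C)
    (N M : ℕ) (hNM : N ≤ M) (a b : ℕ → ℝ)
    (ha : ∀ n, 0 ≤ a n) (hb : ∀ n, 0 ≤ b n)
    (hN : a N ≤ b N / (C + σ))
    (hrec : ∀ n, N < n → n ≤ M → a n ≤ (b n + σ * a (n - 1)) / (C + σ)) :
    Real.sqrt (∑ n ∈ Finset.Icc N M, a n ^ 2) ≤
      (1 / C) * Real.sqrt (∑ n ∈ Finset.Icc N M, b n ^ 2) := by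
  have hD0 : 0 < C + σ := by positivity
  set D : ℝ := C + σ with hD
  set X : ℝ := Real.sqrt (∑ n ∈ Finset.Icc N M, a n ^ 2) with hX
  set Y : ℝ := Real.sqrt (∑ n ∈ Finset.Icc N M, b n ^ 2) with hYdef
  have hX0 : 0 ≤ X := Real.sqrt_nonneg _
  have hY0 : 0 ≤ Y := Real.sqrt_nonneg _
  set d : ℕ → ℝ := fun n => if n = N then 0 else σ / D * a (n - 1) with hd
  have hd0 : ∀ n, 0 ≤ d n := by
    intro n; simp only [hd]; split
    · exact le_refl 0
    · exact mul_nonneg (div_nonneg hσ.le hD0.le) (ha _)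
  set c : ℕ → ℝ := fun n => b n / D with hc
  have hc0 : ∀ n, 0 ≤ c n := fun n => div_nonneg (hb n) hD0.le
  have hcomp : ∀ n ∈ Finset.Icc N M, a n ≤ c n + d n := by
    intro n hn
    simp only [hc, hd]
    by_cases h : n = N
    · subst h; simpa using hN
    · rw [if_neg h]
      have hn' : N < n := lt_of_le_of_ne (Finset.mem_Icc.mp hn).1 (Ne.symm h)
      calc a n ≤ (b n + σ * a (n - 1)) / D := hrec n hn' (Finset.mem_Icc.mp hn).2
        _ = b n / D + σ / D * a (n - 1) := by field_simp
  have h2 : X ≤ Real.sqrt (∑ n ∈ Finset.Icc N M, (c n + d n) ^ 2) := by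
    apply Real.sqrt_le_sqrt
    apply Finset.sum_le_sum
    intro n hn
    have := hcomp n hn
    nlinarith [ha n, hc0 n, hd0 n]
  have h3 : Real.sqrt (∑ n ∈ Finset.Icc N M, (c n + d n) ^ 2) ≤
      Real.sqrt (∑ n ∈ Finset.Icc N M, c n ^ 2) + Real.sqrt (∑ n ∈ Finset.Icc N M, d n ^ 2) := by
    have hcs := Real.sum_mul_le_sqrt_mul_sqrt (Finset.Icc N M) c d
    have hexp : ∑ n ∈ Finset.Icc N M, (c n + d n) ^ 2
        = ∑ n ∈ Finset.Icc N M, c n ^ 2 + 2 * ∑ n ∈ Finset.Icc N M, c n * d n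
          + ∑ n ∈ Finset.Icc N M, d n ^ 2 := by
      rw [Finset.mul_sum, ← Finset.sum_add_distrib, ← Finset.sum_add_distrib]
      apply Finset.sum_congr rfl; intro n _; ring
    have hle : ∑ n ∈ Finset.Icc N M, (c n + d n) ^ 2 ≤
        (Real.sqrt (∑ n ∈ Finset.Icc N M, c n ^ 2) + Real.sqrt (∑ n ∈ Finset.Icc N M, d n ^ 2)) ^ 2 := by
      rw [hexp]
      have e1 : Real.sqrt (∑ n ∈ Finset.Icc N M, c n ^ 2) ^ 2 = ∑ n ∈ Finset.Icc N M, c n ^ 2 :=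
        Real.sq_sqrt (Finset.sum_nonneg fun n _ => sq_nonneg _)
      have e2 : Real.sqrt (∑ n ∈ Finset.Icc N M, d n ^ 2) ^ 2 = ∑ n ∈ Finset.Icc N M, d n ^ 2 :=
        Real.sq_sqrt (Finset.sum_nonneg fun n _ => sq_nonneg _)
      nlinarith [hcs]
    calc Real.sqrt (∑ n ∈ Finset.Icc N M, (c n + d n) ^ 2)
        ≤ Real.sqrt ((Real.sqrt (∑ n ∈ Finset.Icc N M, c n ^ 2)
            + Real.sqrt (∑ n ∈ Finset.Icc N M, d n ^ 2)) ^ 2) := Real.sqrt_le_sqrt hle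
      _ = _ := Real.sqrt_sq (by positivity)
  have h4 : Real.sqrt (∑ n ∈ Finset.Icc N M, c n ^ 2) = Y / D := by
    have h : ∑ n ∈ Finset.Icc N M, c n ^ 2 = (∑ n ∈ Finset.Icc N M, b n ^ 2) / D ^ 2 := by
      rw [Finset.sum_div]; apply Finset.sum_congr rfl; intro n _
      simp only [hc]; field_simp
    rw [h, Real.sqrt_div (Finset.sum_nonneg fun n _ => sq_nonneg _),
      Real.sqrt_sq hD0.le]
  have h5 : Real.sqrt (∑ n ∈ Finset.Icc N M, d n ^ 2) ≤ σ / D * X := by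
    have hsum : ∑ n ∈ Finset.Icc N M, d n ^ 2 ≤ (σ / D) ^ 2 * ∑ n ∈ Finset.Icc N M, a n ^ 2 := by
      have e1 : ∑ n ∈ Finset.Icc N M, d n ^ 2
          = ∑ n ∈ Finset.filter (fun n => ¬ n = N) (Finset.Icc N M), (σ / D * a (n - 1)) ^ 2 := by
        rw [Finset.sum_filter]
        apply Finset.sum_congr rfl; intro n _
        simp only [hd]; split <;> simp
      have e2 : Finset.filter (fun n => ¬ n = N) (Finset.Icc N M) = Finset.Icc (N + 1) M := by
        ext n; simp only [Finset.mem_filter, Finset.mem_Icc]; omega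
      rw [e1, e2]
      have e3 : ∑ n ∈ Finset.Icc (N + 1) M, (σ / D * a (n - 1)) ^ 2
          ≤ ∑ m ∈ Finset.Icc N M, (σ / D * a m) ^ 2 := by
        have hinj : ∀ x ∈ Finset.Icc (N + 1) M, ∀ y ∈ Finset.Icc (N + 1) M,
            x - 1 = y - 1 → x = y := by
          intro x hx y hy h; simp only [Finset.mem_Icc] at hx hy; omega
        have e4 : ∑ n ∈ Finset.Icc (N + 1) M, (σ / D * a (n - 1)) ^ 2
            = ∑ m ∈ (Finset.Icc (N + 1) M).image (fun n => n - 1), (σ / D * a m) ^ 2 :=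
          (Finset.sum_image (g := fun n => n - 1) (f := fun m => (σ / D * a m) ^ 2) hinj).symm
        rw [e4]
        apply Finset.sum_le_sum_of_subset_of_nonneg
        · intro m hm
          simp only [Finset.mem_image, Finset.mem_Icc] at hm ⊢
          obtain ⟨x, hx, rfl⟩ := hm; omega
        · intro m _ _; positivity
      calc ∑ n ∈ Finset.Icc (N + 1) M, (σ / D * a (n - 1)) ^ 2 ≤ _ := e3
        _ = (σ / D) ^ 2 * ∑ n ∈ Finset.Icc N M, a n ^ 2 := by
          rw [Finset.mul_sum]; apply Finset.sum_congr rfl; intro n _; ring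
    calc Real.sqrt (∑ n ∈ Finset.Icc N M, d n ^ 2)
        ≤ Real.sqrt ((σ / D) ^ 2 * ∑ n ∈ Finset.Icc N M, a n ^ 2) := Real.sqrt_le_sqrt hsum
      _ = σ / D * X := by
          rw [Real.sqrt_mul (sq_nonneg _), Real.sqrt_sq (by positivity)]
  have hfinal : X ≤ Y / D + σ / D * X := le_trans h2 (le_trans h3 (by rw [h4]; gcongr))
  have h6 : D * X ≤ Y + σ * X := by
    calc D * X ≤ D * (Y / D + σ / D * X) := by
          exact mul_le_mul_of_nonneg_left hfinal hD0.le
      _ = Y + σ * X := by field_simp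
  have h7 : X * C ≤ Y := by
    have hDe : D = C + σ := hD
    nlinarith [h6]
  have h8 : X ≤ Y / C := (le_div_iff₀ hC).mpr h7
  rw [one_div, inv_mul_eq_div]
  exact h8

private lemma smooth_cast {f : ℝ → ℂ} (hf : ContDiff ℝ (⊤ : ℕ∞) f) (n : ℕ) :
    ContDiff ℝ (n : ℕ∞) f := hf.of_le (by exact_mod_cast le_top)

lemma itd_add {f g : ℝ → ℂ} (hf : ContDiff ℝ (⊤ : ℕ∞) f) (hg : ContDiff ℝ (⊤ : ℕ∞) g)
    (n : ℕ) (x : ℝ) :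
    iteratedDeriv n (fun y => f y + g y) x = iteratedDeriv n f x + iteratedDeriv n g x := by
  rw [← iteratedDerivWithin_univ, ← iteratedDerivWithin_univ, ← iteratedDerivWithin_univ]
  exact iteratedDerivWithin_add (Set.mem_univ x) uniqueDiffOn_univ
    (smooth_cast hf n).contDiffAt.contDiffWithinAt (smooth_cast hg n).contDiffAt.contDiffWithinAt

lemma itd_sub {f g : ℝ → ℂ} (hf : ContDiff ℝ (⊤ : ℕ∞) f) (hg : ContDiff ℝ (⊤ : ℕ∞) g)
    (n : ℕ) (x : ℝ) :
    iteratedDeriv n (fun y => f y - g y) x = iteratedDeriv n f x - iteratedDeriv n g x := by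
  rw [← iteratedDerivWithin_univ, ← iteratedDerivWithin_univ, ← iteratedDerivWithin_univ]
  exact iteratedDerivWithin_sub (Set.mem_univ x) uniqueDiffOn_univ
    (smooth_cast hf n).contDiffAt.contDiffWithinAt (smooth_cast hg n).contDiffAt.contDiffWithinAt

lemma itd_const_mul (c : ℂ) {f : ℝ → ℂ} (hf : ContDiff ℝ (⊤ : ℕ∞) f) (n : ℕ) (x : ℝ) :
    iteratedDeriv n (fun y => c * f y) x = c * iteratedDeriv n f x := by
  rw [← iteratedDerivWithin_univ, ← iteratedDerivWithin_univ]
  have := iteratedDerivWithin_const_smul (𝕜 := ℝ) (F := ℂ) (R := ℂ) (f := f)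
    (s := Set.univ) (x := x) (n := n) (Set.mem_univ x) uniqueDiffOn_univ c
    (smooth_cast hf n).contDiffAt.contDiffWithinAt
  simpa [smul_eq_mul] using this

lemma itd_sum {ι : Type*} (s : Finset ι) (F : ι → ℝ → ℂ)
    (h : ∀ i ∈ s, ContDiff ℝ (⊤ : ℕ∞) (F i)) (n : ℕ) (x : ℝ) :
    iteratedDeriv n (fun y => ∑ i ∈ s, F i y) x = ∑ i ∈ s, iteratedDeriv n (F i) x := by
  simp only [iteratedDeriv_eq_iteratedFDeriv]
  rw [show (fun y => ∑ i ∈ s, F i y) = (∑ j ∈ s, F j ·) from rfl,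
    iteratedFDeriv_sum (fun j hj => smooth_cast (h j hj) n)]
  simp

lemma itd_const (c : ℂ) (n : ℕ) (hn : n ≠ 0) (x : ℝ) :
    iteratedDeriv n (fun _ : ℝ => c) x = 0 := by
  rw [iteratedDeriv_eq_iteratedFDeriv, iteratedFDeriv_const_of_ne hn]
  simp

lemma hasDerivAt_ofReal (x : ℝ) : HasDerivAt (fun y : ℝ => (y : ℂ)) 1 x := by
  simpa using (hasDerivAt_id x).ofReal_comp

lemma hasDerivAt_sub_one_pow (k : ℕ) (x : ℝ) :
    HasDerivAt (fun y : ℝ => ((y : ℂ) - 1) ^ k) ((k : ℂ) * ((x : ℂ) - 1) ^ (k - 1)) x := by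
  induction k with
  | zero =>
    have heq : (fun y : ℝ => ((y : ℂ) - 1) ^ 0) = fun _ : ℝ => (1 : ℂ) := by
      funext y; simp
    rw [heq]
    simpa using hasDerivAt_const x (1 : ℂ)
  | succ k IH =>
    have heq : (fun y : ℝ => ((y : ℂ) - 1) ^ (k + 1))
        = fun y : ℝ => ((y : ℂ) - 1) ^ k * ((y : ℂ) - 1) := by
      funext y; ring
    rw [heq]
    have h := IH.mul ((hasDerivAt_ofReal x).sub_const 1)
    refine h.congr_deriv ?_
    rcases k with _ | j
    · norm_num
    · have : j + 1 + 1 - 1 = j + 1 := by omega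
      rw [this]
      have : j + 1 - 1 = j := by omega
      rw [this]
      push_cast
      ring

/-- iterated derivative of `x ↦ ((x:ℂ)-1)^i * c` vanishes for `n > i`. -/
lemma itd_monomial_zero : ∀ i : ℕ, ∀ c : ℂ, ∀ n : ℕ, i < n → ∀ x : ℝ,
    iteratedDeriv n (fun y : ℝ => ((y : ℂ) - 1) ^ i * c) x = 0 := by
  intro i
  induction i with
  | zero =>
    intro c n hn x
    have h : (fun y : ℝ => ((y : ℂ) - 1) ^ 0 * c) = fun _ : ℝ => c := by
      funext y; simp
    rw [h]
    exact itd_const c n (by omega) x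
  | succ i IH =>
    intro c n hn x
    obtain ⟨m, rfl⟩ : ∃ m, n = m + 1 := ⟨n - 1, by omega⟩
    rw [iteratedDeriv_succ']
    have hderiv : deriv (fun y : ℝ => ((y : ℂ) - 1) ^ (i + 1) * c)
        = fun y : ℝ => ((y : ℂ) - 1) ^ i * (((i : ℂ) + 1) * c) := by
      funext y
      have h1 : HasDerivAt (fun z : ℝ => ((z : ℂ) - 1) ^ (i + 1) * c)
          (((i + 1 : ℕ) : ℂ) * ((y : ℂ) - 1) ^ (i + 1 - 1) * c) y :=
        (hasDerivAt_sub_one_pow (i + 1) y).mul_const c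
      rw [h1.deriv]
      have : i + 1 - 1 = i := by omega
      rw [this]
      push_cast
      ring
    rw [hderiv]
    exact IH _ m (by omega) x

lemma itd_hasDerivAt {v : ℝ → ℂ} (hv : ContDiff ℝ (⊤ : ℕ∞) v) (m : ℕ) (x : ℝ) :
    HasDerivAt (iteratedDeriv m v) (iteratedDeriv (m + 1) v x) x := by
  have hdiff : Differentiable ℝ (iteratedDeriv m v) := by
    apply ContDiff.differentiable_iteratedDeriv (n := ((m + 1 : ℕ) : ℕ∞)) m
      (smooth_cast hv (m + 1))
    exact_mod_cast Nat.lt_succ_self m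
  have h := (hdiff x).hasDerivAt
  rwa [iteratedDeriv_succ]

/-- Leibniz formula for multiplication by `κ y + y²`. -/
lemma itd_quad_mul (κ : ℝ) {v : ℝ → ℂ} (hv : ContDiff ℝ (⊤ : ℕ∞) v) : ∀ (n : ℕ) (x : ℝ),
    iteratedDeriv n (fun y : ℝ => ((κ : ℂ) * y + (y : ℂ) ^ 2) * v y) x
      = ((κ : ℂ) * x + (x : ℂ) ^ 2) * iteratedDeriv n v x
        + (n : ℂ) * ((κ : ℂ) + 2 * x) * iteratedDeriv (n - 1) v x
        + (n : ℂ) * ((n : ℂ) - 1) * iteratedDeriv (n - 2) v x := by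
  intro n
  induction n with
  | zero =>
    intro x
    simp [iteratedDeriv_zero]
  | succ n IH =>
    intro x
    rw [iteratedDeriv_succ]
    have hfun : iteratedDeriv n (fun y : ℝ => ((κ : ℂ) * y + (y : ℂ) ^ 2) * v y)
        = fun z : ℝ => ((κ : ℂ) * z + (z : ℂ) ^ 2) * iteratedDeriv n v z
          + (n : ℂ) * ((κ : ℂ) + 2 * z) * iteratedDeriv (n - 1) v z
          + (n : ℂ) * ((n : ℂ) - 1) * iteratedDeriv (n - 2) v z := funext IH
    rw [hfun]
    have hc : HasDerivAt (fun y : ℝ => ((κ : ℂ) * y + (y : ℂ) ^ 2))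
        ((κ : ℂ) + 2 * x) x := by
      have h1 := (hasDerivAt_ofReal x).const_mul (κ : ℂ)
      have h2 : HasDerivAt (fun y : ℝ => ((y : ℂ)) ^ 2) (2 * (x : ℂ)) x := by
        have hm := (hasDerivAt_ofReal x).mul (hasDerivAt_ofReal x)
        have heq : (fun y : ℝ => ((y : ℂ)) ^ 2) = fun y : ℝ => (y : ℂ) * (y : ℂ) := by
          funext y; ring
        rw [heq]
        refine hm.congr_deriv ?_
        ring
      have h3 := h1.add h2
      refine h3.congr_deriv ?_
      ring
    have hc2 : HasDerivAt (fun y : ℝ => (n : ℂ) * ((κ : ℂ) + 2 * y))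
        ((n : ℂ) * 2) x := by
      have h1 := ((hasDerivAt_ofReal x).const_mul (2 : ℂ)).const_add (κ : ℂ)
      have h2 := h1.const_mul (n : ℂ)
      refine h2.congr_deriv ?_
      ring
    have T1 := hc.mul (itd_hasDerivAt hv n x)
    have T2 := hc2.mul (itd_hasDerivAt hv (n - 1) x)
    have T3 := (itd_hasDerivAt hv (n - 2) x).const_mul ((n : ℂ) * ((n : ℂ) - 1))
    have Tall := (T1.add T2).add T3
    have hD : deriv (fun z : ℝ => ((κ : ℂ) * z + (z : ℂ) ^ 2) * iteratedDeriv n v z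
          + (n : ℂ) * ((κ : ℂ) + 2 * z) * iteratedDeriv (n - 1) v z
          + (n : ℂ) * ((n : ℂ) - 1) * iteratedDeriv (n - 2) v z) x
        = (((κ : ℂ) + 2 * x) * iteratedDeriv n v x
            + ((κ : ℂ) * x + (x : ℂ) ^ 2) * iteratedDeriv (n + 1) v x
          + ((n : ℂ) * 2 * iteratedDeriv (n - 1) v x
            + (n : ℂ) * ((κ : ℂ) + 2 * x) * iteratedDeriv (n - 1 + 1) v x))
          + (n : ℂ) * ((n : ℂ) - 1) * iteratedDeriv (n - 2 + 1) v x := Tall.deriv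
    rw [hD]
    rcases n with _ | _ | m
    · norm_num
      ring
    · norm_num
      ring
    · have e1 : m + 1 + 1 - 1 = m + 1 := by omega
      have e2 : m + 1 + 1 - 2 = m := by omega
      have e3 : m + 1 + 1 + 1 - 1 = m + 1 + 1 := by omega
      have e4 : m + 1 + 1 + 1 - 2 = m + 1 := by omega
      rw [e1, e2, e3, e4]
      push_cast
      ring

/-- Equality on `[0,1]` propagates to iterated derivatives at `0`. -/
lemma itd_eq_at_zero {f g : ℝ → ℂ} (hf : ContDiff ℝ (⊤ : ℕ∞) f) (hg : ContDiff ℝ (⊤ : ℕ∞) g)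
    (h : ∀ x ∈ Set.Icc (0:ℝ) 1, f x = g x) (n : ℕ) :
    iteratedDeriv n f 0 = iteratedDeriv n g 0 := by
  have hIoo : ∀ m : ℕ, Set.EqOn (iteratedDeriv m f) (iteratedDeriv m g) (Set.Ioo (0:ℝ) 1) := by
    intro m
    induction m with
    | zero =>
      intro x hx
      simpa [iteratedDeriv_zero] using h x (Set.Ioo_subset_Icc_self hx)
    | succ m IH =>
      intro x hx
      rw [iteratedDeriv_succ, iteratedDeriv_succ]
      exact Filter.EventuallyEq.deriv_eq
        (Filter.eventuallyEq_of_mem (isOpen_Ioo.mem_nhds hx) IH)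
  have hcf : Continuous (iteratedDeriv n f) :=
    hf.continuous_iteratedDeriv n (by exact_mod_cast le_top)
  have hcg : Continuous (iteratedDeriv n g) :=
    hg.continuous_iteratedDeriv n (by exact_mod_cast le_top)
  have hcl := (hIoo n).closure hcf hcg
  have h0 : (0:ℝ) ∈ closure (Set.Ioo (0:ℝ) 1) := by
    rw [closure_Ioo (by norm_num : (0:ℝ) ≠ 1)]
    constructor <;> norm_num
  exact hcl h0

/-- smoothness of the real-to-complex coercion -/
lemma smooth_ofReal : ContDiff ℝ (⊤ : ℕ∞) (fun y : ℝ => (y : ℂ)) :=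
  Complex.ofRealCLM.contDiff

lemma smooth_quad (κ : ℝ) : ContDiff ℝ (⊤ : ℕ∞) (fun y : ℝ => ((κ : ℂ) * y + (y : ℂ) ^ 2)) :=
  (contDiff_const.mul smooth_ofReal).add (smooth_ofReal.pow 2)

/-- The master recurrence identity at `x = 0`. -/
lemma ode_recurrence (κ lam : ℝ) (s : ℂ) (N : ℕ)
    (u f : ℝ → ℂ) (hu : ContDiff ℝ (⊤ : ℕ∞) u) (hf : ContDiff ℝ (⊤ : ℕ∞) f)
    (hode : ∀ x ∈ Set.Icc (0:ℝ) 1,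
      deriv (fun y : ℝ => ((κ * y + y ^ 2 : ℝ) : ℂ) * deriv u y) x + s * deriv u x
        - (N : ℂ) * ((N : ℂ) + 1) * u x
        + (lam : ℂ) * ∑ i ∈ Finset.range N,
            ((x : ℂ) - 1) ^ i / (i.factorial : ℂ) * iteratedDeriv (i + 1) u 1
        = f x)
    (n : ℕ) (hn : N ≤ n) :
    (s + ((n : ℂ) + 1) * (κ : ℂ)) * iteratedDeriv n (deriv u) 0
      + ((((n : ℝ) * ((n : ℝ) + 1) - (N : ℝ) * ((N : ℝ) + 1) : ℝ)) : ℂ)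
          * iteratedDeriv (n - 1) (deriv u) 0
      = iteratedDeriv n f 0 := by
  set v : ℝ → ℂ := deriv u with hvdef
  have hv : ContDiff ℝ (⊤ : ℕ∞) v := (contDiff_infty_iff_deriv.mp hu).2
  -- rewrite the coefficient function
  have hcoef : (fun y : ℝ => ((κ * y + y ^ 2 : ℝ) : ℂ) * deriv u y)
      = fun y : ℝ => ((κ : ℂ) * y + (y : ℂ) ^ 2) * v y := by
    funext y; push_cast; rfl
  -- the full left-hand side as a function
  set φ : ℝ → ℂ := fun y : ℝ => ((κ : ℂ) * y + (y : ℂ) ^ 2) * v y with hφdef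
  have hφ : ContDiff ℝ (⊤ : ℕ∞) φ := (smooth_quad κ).mul hv
  have hdφ : ContDiff ℝ (⊤ : ℕ∞) (deriv φ) := (contDiff_infty_iff_deriv.mp hφ).2
  set P : ℝ → ℂ := fun x : ℝ => ∑ i ∈ Finset.range N,
      ((x : ℂ) - 1) ^ i / (i.factorial : ℂ) * iteratedDeriv (i + 1) u 1 with hPdef
  have hPsmooth : ContDiff ℝ (⊤ : ℕ∞) P := by
    apply ContDiff.sum
    intro i _
    exact ((smooth_ofReal.sub contDiff_const).pow i).div_const _ |>.mul contDiff_const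
  set G : ℝ → ℂ := fun x => deriv φ x + s * v x - (N : ℂ) * ((N : ℂ) + 1) * u x
      + (lam : ℂ) * P x with hGdef
  have hGf : ∀ x ∈ Set.Icc (0:ℝ) 1, G x = f x := by
    intro x hx
    have := hode x hx
    rw [hcoef] at this
    exact this
  have hG : ContDiff ℝ (⊤ : ℕ∞) G := by
    exact ((hdφ.add (contDiff_const.mul hv)).sub (contDiff_const.mul hu)).add
      (contDiff_const.mul hPsmooth)
  -- iterated derivatives at 0 agree
  have hmain := itd_eq_at_zero hG hf hGf n
  -- expand iteratedDeriv n G 0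
  have h1 : iteratedDeriv n G 0
      = iteratedDeriv n (deriv φ) 0 + s * iteratedDeriv n v 0
        - (N : ℂ) * ((N : ℂ) + 1) * iteratedDeriv n u 0
        + (lam : ℂ) * iteratedDeriv n P 0 := by
    have e1 : iteratedDeriv n G 0
        = iteratedDeriv n (fun x => deriv φ x + s * v x - (N : ℂ) * ((N : ℂ) + 1) * u x) 0
          + iteratedDeriv n (fun x => (lam : ℂ) * P x) 0 :=
      itd_add (((hdφ.add (contDiff_const.mul hv)).sub (contDiff_const.mul hu)))
        (contDiff_const.mul hPsmooth) n 0
    have e2 : iteratedDeriv n (fun x => deriv φ x + s * v x - (N : ℂ) * ((N : ℂ) + 1) * u x) 0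
        = iteratedDeriv n (fun x => deriv φ x + s * v x) 0
          - iteratedDeriv n (fun x => (N : ℂ) * ((N : ℂ) + 1) * u x) 0 :=
      itd_sub (hdφ.add (contDiff_const.mul hv)) (contDiff_const.mul hu) n 0
    have e3 : iteratedDeriv n (fun x => deriv φ x + s * v x) 0
        = iteratedDeriv n (deriv φ) 0 + iteratedDeriv n (fun x => s * v x) 0 :=
      itd_add hdφ (contDiff_const.mul hv) n 0
    have e4 : iteratedDeriv n (fun x => s * v x) 0 = s * iteratedDeriv n v 0 :=
      itd_const_mul s hv n 0
    have e5 : iteratedDeriv n (fun x => (N : ℂ) * ((N : ℂ) + 1) * u x) 0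
        = (N : ℂ) * ((N : ℂ) + 1) * iteratedDeriv n u 0 :=
      itd_const_mul _ hu n 0
    have e6 : iteratedDeriv n (fun x => (lam : ℂ) * P x) 0
        = (lam : ℂ) * iteratedDeriv n P 0 :=
      itd_const_mul _ hPsmooth n 0
    rw [e1, e2, e3, e4, e5, e6]
  -- the polynomial part vanishes
  have hP0 : iteratedDeriv n P 0 = 0 := by
    by_cases hN : N = 0
    · subst hN
      have : P = fun _ : ℝ => (0 : ℂ) := by funext x; simp [hPdef]
      rw [this]
      rcases n with _ | m
      · simp [iteratedDeriv_zero]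
      · exact itd_const 0 (m+1) (by omega) 0
    · have hsum := itd_sum (Finset.range N)
        (fun i => fun x : ℝ => ((x : ℂ) - 1) ^ i / (i.factorial : ℂ) * iteratedDeriv (i + 1) u 1)
        (fun i _ => ((smooth_ofReal.sub contDiff_const).pow i).div_const _ |>.mul contDiff_const)
        n 0
      rw [show P = fun x : ℝ => ∑ i ∈ Finset.range N,
          (fun i => fun x : ℝ => ((x : ℂ) - 1) ^ i / (i.factorial : ℂ)
            * iteratedDeriv (i + 1) u 1) i x from rfl, hsum]
      apply Finset.sum_eq_zero
      intro i hi
      have hi' : i < n := lt_of_lt_of_le (Finset.mem_range.mp hi) hn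
      have heq : (fun x : ℝ => ((x : ℂ) - 1) ^ i / (i.factorial : ℂ) * iteratedDeriv (i + 1) u 1)
          = fun x : ℝ => ((x : ℂ) - 1) ^ i
              * (iteratedDeriv (i + 1) u 1 / (i.factorial : ℂ)) := by
        funext x; ring
      rw [heq]
      exact itd_monomial_zero i _ n hi' 0
  -- the derivative-of-product part
  have hquad : iteratedDeriv n (deriv φ) 0
      = ((n : ℂ) + 1) * (κ : ℂ) * iteratedDeriv n v 0
        + ((n : ℂ) + 1) * (n : ℂ) * iteratedDeriv (n - 1) v 0 := by
    rw [← iteratedDeriv_succ']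
    have := itd_quad_mul κ hv (n + 1) 0
    rw [hφdef]
    rw [this]
    have e1 : n + 1 - 1 = n := by omega
    have e2 : n + 1 - 2 = n - 1 := by omega
    rw [e1, e2]
    push_cast
    ring
  -- relate iteratedDeriv n u 0 with iteratedDeriv (n-1) v 0
  rw [h1, hP0, hquad] at hmain
  rcases Nat.eq_zero_or_pos n with hn0 | hnpos
  · subst hn0
    have hN0 : N = 0 := Nat.le_zero.mp hn
    subst hN0
    push_cast at hmain ⊢
    norm_num at hmain ⊢
    linear_combination hmain
  · obtain ⟨m, rfl⟩ : ∃ m, n = m + 1 := ⟨n - 1, by omega⟩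
    have hu' : iteratedDeriv (m + 1) u 0 = iteratedDeriv m v 0 := by
      rw [iteratedDeriv_succ']
    have e1 : m + 1 - 1 = m := by omega
    rw [e1] at hmain ⊢
    rw [hu'] at hmain
    push_cast at hmain ⊢
    linear_combination hmain

lemma wkey_sqrt (σ : ℝ) (hσ : 0 < σ) (m : ℕ) :
    Real.sqrt (σ ^ (2 * (m + 1) + 1)
        / (((m + 1).factorial : ℝ) ^ 2 * ((m + 2).factorial : ℝ) ^ 2))
      * (((m : ℝ) + 1) * ((m : ℝ) + 2))
    = σ * Real.sqrt (σ ^ (2 * m + 1)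
        / ((m.factorial : ℝ) ^ 2 * ((m + 1).factorial : ℝ) ^ 2)) := by
  have hf1 : (0:ℝ) < (m.factorial : ℝ) := by exact_mod_cast m.factorial_pos
  have hf2 : (0:ℝ) < ((m + 1).factorial : ℝ) := by exact_mod_cast (m + 1).factorial_pos
  have hf3 : (0:ℝ) < ((m + 2).factorial : ℝ) := by exact_mod_cast (m + 2).factorial_pos
  have hw1 : (0:ℝ) ≤ σ ^ (2 * (m + 1) + 1)
      / (((m + 1).factorial : ℝ) ^ 2 * ((m + 2).factorial : ℝ) ^ 2) := by positivity
  have hw2 : (0:ℝ) ≤ σ ^ (2 * m + 1)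
      / ((m.factorial : ℝ) ^ 2 * ((m + 1).factorial : ℝ) ^ 2) := by positivity
  have hsq : (Real.sqrt (σ ^ (2 * (m + 1) + 1)
        / (((m + 1).factorial : ℝ) ^ 2 * ((m + 2).factorial : ℝ) ^ 2))
      * (((m : ℝ) + 1) * ((m : ℝ) + 2))) ^ 2
      = (σ * Real.sqrt (σ ^ (2 * m + 1)
        / ((m.factorial : ℝ) ^ 2 * ((m + 1).factorial : ℝ) ^ 2))) ^ 2 := by
    rw [mul_pow, Real.sq_sqrt hw1, mul_pow σ, Real.sq_sqrt hw2]
    have e1 : ((m + 1).factorial : ℝ) = ((m : ℝ) + 1) * (m.factorial : ℝ) := by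
      rw [Nat.factorial_succ]; push_cast; ring
    have e2 : ((m + 2).factorial : ℝ) = ((m : ℝ) + 2) * ((m + 1).factorial : ℝ) := by
      rw [show m + 2 = (m + 1) + 1 from rfl, Nat.factorial_succ]; push_cast; ring
    have e3 : σ ^ (2 * (m + 1) + 1) = σ ^ 2 * σ ^ (2 * m + 1) := by
      rw [← pow_add]; congr 1; omega
    rw [e3, e2, e1]
    field_simp
  have hL0 : (0:ℝ) ≤ Real.sqrt (σ ^ (2 * (m + 1) + 1)
      / (((m + 1).factorial : ℝ) ^ 2 * ((m + 2).factorial : ℝ) ^ 2))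
      * (((m : ℝ) + 1) * ((m : ℝ) + 2)) := by positivity
  have hR0 : (0:ℝ) ≤ σ * Real.sqrt (σ ^ (2 * m + 1)
      / ((m.factorial : ℝ) ^ 2 * ((m + 1).factorial : ℝ) ^ 2)) := by positivity
  nlinarith [hsq, hL0, hR0]

end Statement6Aux

/-- Boundary estimate (Lemma `Best`): for `s ∈ Ω¹_σ` and solutions of the
shifted ODE, `[u']_σ^{N,M} ≤ (1/C_{s,σ}) [f]_σ^{N,M}`. -/
theorem statement6 (κ σ lam : ℝ) (s : ℂ) (N M : ℕ)
    (hκ : 0 ≤ κ) (hσ : 0 < σ) (hNM : N ≤ M) (hs : s ∈ Omega1 σ)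
    (u f : ℝ → ℂ) (hu : ContDiff ℝ (⊤ : ℕ∞) u) (hf : ContDiff ℝ (⊤ : ℕ∞) f)
    (hode : ShiftedODE κ s N lam u f) :
    bsemPR σ N M (deriv u) ≤ (1 / Csig s σ) * bsemPR σ N M f := by
  classical
  obtain ⟨hodeEq, -⟩ := hode
  set v : ℝ → ℂ := deriv u with hvdef
  set C : ℝ := Csig s σ with hCdef
  -- positivity of C and the modulus lower bound
  have hC : 0 < C := by
    rcases hs with ⟨hsre, hsim⟩ | ⟨hsre, hsabs⟩
    · rw [hCdef, Csig, if_pos hsre]; linarith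
    · rw [hCdef, Csig, if_neg (not_le.mpr hsre)]; linarith
  have habs : ∀ n : ℕ, C + σ ≤ ‖s + ((n : ℂ) + 1) * (κ : ℂ)‖ := by
    intro n
    have ht0 : (0:ℝ) ≤ ((n : ℝ) + 1) * κ := by positivity
    have hts : ((n : ℂ) + 1) * (κ : ℂ) = ((((n : ℝ) + 1) * κ : ℝ) : ℂ) := by push_cast; ring
    rw [hts]
    have him : (s + ((((n : ℝ) + 1) * κ : ℝ) : ℂ)).im = s.im := by simp
    have hre : (s + ((((n : ℝ) + 1) * κ : ℝ) : ℂ)).re = s.re + ((n : ℝ) + 1) * κ := by simp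
    rcases hs with ⟨hsre, hsim⟩ | ⟨hsre, hsabs⟩
    · have hCeq : C = |s.im| - σ := by rw [hCdef, Csig, if_pos hsre]
      have h1 := Complex.abs_im_le_norm (s + ((((n : ℝ) + 1) * κ : ℝ) : ℂ))
      rw [him] at h1
      linarith
    · have hCeq : C = ‖s‖ - σ := by rw [hCdef, Csig, if_neg (not_le.mpr hsre)]
      have h2 : ‖s‖ ^ 2 ≤ ‖s + ((((n : ℝ) + 1) * κ : ℝ) : ℂ)‖ ^ 2 := by
        rw [Complex.sq_norm, Complex.sq_norm, Complex.normSq_apply, Complex.normSq_apply,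
          him, hre]
        nlinarith
      have h3 := Real.sqrt_le_sqrt h2
      rw [Real.sqrt_sq (norm_nonneg _), Real.sqrt_sq (norm_nonneg _)] at h3
      linarith
  -- the weights
  set w : ℕ → ℝ := fun n =>
    σ ^ (2 * n + 1) / ((n.factorial : ℝ) ^ 2 * ((n + 1).factorial : ℝ) ^ 2) with hwdef
  have hw0 : ∀ n, 0 < w n := by
    intro n
    have hf1 : (0:ℝ) < (n.factorial : ℝ) := by exact_mod_cast n.factorial_pos
    have hf2 : (0:ℝ) < ((n + 1).factorial : ℝ) := by exact_mod_cast (n + 1).factorial_pos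
    exact div_pos (pow_pos hσ _) (by positivity)
  set A : ℕ → ℝ := fun n => Real.sqrt (w n) * ‖iteratedDeriv n v 0‖ with hAdef
  set B : ℕ → ℝ := fun n => Real.sqrt (w n) * ‖iteratedDeriv n f 0‖ with hBdef
  have hA0 : ∀ n, 0 ≤ A n := fun n => by positivity
  have hB0 : ∀ n, 0 ≤ B n := fun n => by positivity
  -- identify the seminorms
  have hbv : bsemPR σ N M v = Real.sqrt (∑ n ∈ Finset.Icc N M, A n ^ 2) := by
    rw [bsemPR]
    congr 1
    apply Finset.sum_congr rfl
    intro n _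
    rw [hAdef]
    rw [mul_pow, Real.sq_sqrt (hw0 n).le, bTerm]
  have hbf : bsemPR σ N M f = Real.sqrt (∑ n ∈ Finset.Icc N M, B n ^ 2) := by
    rw [bsemPR]
    congr 1
    apply Finset.sum_congr rfl
    intro n _
    rw [hBdef, mul_pow, Real.sq_sqrt (hw0 n).le, bTerm]
  rw [hbv, hbf]
  -- the recurrence identity
  have hid := ode_recurrence κ lam s N u f hu hf hodeEq
  have hDpos : (0:ℝ) < C + σ := by linarith
  -- base case
  have hN : A N ≤ B N / (C + σ) := by
    have h := hid N le_rfl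
    rw [sub_self, Complex.ofReal_zero, zero_mul, add_zero] at h
    have hnorm : ‖s + ((N : ℂ) + 1) * (κ : ℂ)‖ * ‖iteratedDeriv N v 0‖
        = ‖iteratedDeriv N f 0‖ := by
      rw [← norm_mul, h]
    have h2 : (C + σ) * ‖iteratedDeriv N v 0‖ ≤ ‖iteratedDeriv N f 0‖ :=
      le_trans (mul_le_mul_of_nonneg_right (habs N) (norm_nonneg _)) (le_of_eq hnorm)
    rw [le_div_iff₀ hDpos, hAdef, hBdef]
    calc Real.sqrt (w N) * ‖iteratedDeriv N v 0‖ * (C + σ)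
        = Real.sqrt (w N) * ((C + σ) * ‖iteratedDeriv N v 0‖) := by ring
      _ ≤ Real.sqrt (w N) * ‖iteratedDeriv N f 0‖ :=
          mul_le_mul_of_nonneg_left h2 (Real.sqrt_nonneg _)
  -- recurrence case
  have hrec : ∀ n, N < n → n ≤ M → A n ≤ (B n + σ * A (n - 1)) / (C + σ) := by
    intro n hn _
    obtain ⟨m, rfl⟩ : ∃ m, n = m + 1 := ⟨n - 1, by omega⟩
    have h := hid (m + 1) (by omega)
    rw [show m + 1 - 1 = m from rfl] at h ⊢
    set r : ℝ := ((m : ℝ) + 1) * (((m : ℝ) + 1) + 1) - (N : ℝ) * ((N : ℝ) + 1) with hrdef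
    have hcast : (((m + 1 : ℕ) : ℝ) * (((m + 1 : ℕ) : ℝ) + 1)
        - (N : ℝ) * ((N : ℝ) + 1) : ℝ) = r := by push_cast [hrdef]; ring
    rw [hcast] at h
    have hNm : (N : ℝ) ≤ (m : ℝ) := by exact_mod_cast Nat.lt_succ_iff.mp hn
    have hr0 : 0 ≤ r := by nlinarith [Nat.cast_nonneg (α := ℝ) N]
    have hrle : r ≤ ((m : ℝ) + 1) * ((m : ℝ) + 2) := by nlinarith [Nat.cast_nonneg (α := ℝ) N]
    -- isolate
    have hiso : (s + (((m + 1 : ℕ) : ℂ) + 1) * (κ : ℂ)) * iteratedDeriv (m + 1) v 0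
        = iteratedDeriv (m + 1) f 0 - (r : ℂ) * iteratedDeriv m v 0 := by
      linear_combination h
    have hnorm1 : (C + σ) * ‖iteratedDeriv (m + 1) v 0‖
        ≤ ‖iteratedDeriv (m + 1) f 0‖ + r * ‖iteratedDeriv m v 0‖ := by
      have e1 : ‖(s + (((m + 1 : ℕ) : ℂ) + 1) * (κ : ℂ)) * iteratedDeriv (m + 1) v 0‖
          = ‖s + (((m + 1 : ℕ) : ℂ) + 1) * (κ : ℂ)‖ * ‖iteratedDeriv (m + 1) v 0‖ :=
        norm_mul _ _
      have e2 : ‖iteratedDeriv (m + 1) f 0 - (r : ℂ) * iteratedDeriv m v 0‖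
          ≤ ‖iteratedDeriv (m + 1) f 0‖ + r * ‖iteratedDeriv m v 0‖ := by
        calc ‖iteratedDeriv (m + 1) f 0 - (r : ℂ) * iteratedDeriv m v 0‖
            ≤ ‖iteratedDeriv (m + 1) f 0‖ + ‖(r : ℂ) * iteratedDeriv m v 0‖ :=
              norm_sub_le _ _
          _ = ‖iteratedDeriv (m + 1) f 0‖ + |r| * ‖iteratedDeriv m v 0‖ := by
              rw [norm_mul, Complex.norm_real, Real.norm_eq_abs]
          _ = ‖iteratedDeriv (m + 1) f 0‖ + r * ‖iteratedDeriv m v 0‖ := by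
              rw [abs_of_nonneg hr0]
      calc (C + σ) * ‖iteratedDeriv (m + 1) v 0‖
          ≤ ‖s + (((m + 1 : ℕ) : ℂ) + 1) * (κ : ℂ)‖ * ‖iteratedDeriv (m + 1) v 0‖ :=
            mul_le_mul_of_nonneg_right (habs (m + 1)) (norm_nonneg _)
        _ = ‖iteratedDeriv (m + 1) f 0 - (r : ℂ) * iteratedDeriv m v 0‖ := by
            rw [← e1, hiso]
        _ ≤ _ := e2
    -- multiply by sqrt of weight
    have hw1 : 0 ≤ Real.sqrt (w (m + 1)) := Real.sqrt_nonneg _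
    have hmul : (C + σ) * A (m + 1)
        ≤ B (m + 1) + Real.sqrt (w (m + 1)) * (r * ‖iteratedDeriv m v 0‖) := by
      have := mul_le_mul_of_nonneg_left hnorm1 hw1
      rw [hAdef, hBdef]
      calc (C + σ) * (Real.sqrt (w (m + 1)) * ‖iteratedDeriv (m + 1) v 0‖)
          = Real.sqrt (w (m + 1)) * ((C + σ) * ‖iteratedDeriv (m + 1) v 0‖) := by ring
        _ ≤ Real.sqrt (w (m + 1)) * (‖iteratedDeriv (m + 1) f 0‖
              + r * ‖iteratedDeriv m v 0‖) := mul_le_mul_of_nonneg_left hnorm1 hw1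
        _ = Real.sqrt (w (m + 1)) * ‖iteratedDeriv (m + 1) f 0‖
              + Real.sqrt (w (m + 1)) * (r * ‖iteratedDeriv m v 0‖) := by ring
    have hkey : Real.sqrt (w (m + 1)) * (((m : ℝ) + 1) * ((m : ℝ) + 2)) =
        σ * Real.sqrt (w m) := by
      rw [hwdef]
      exact wkey_sqrt σ hσ m
    have hstep : Real.sqrt (w (m + 1)) * (r * ‖iteratedDeriv m v 0‖) ≤ σ * A m := by
      rw [hAdef]
      calc Real.sqrt (w (m + 1)) * (r * ‖iteratedDeriv m v 0‖)
          ≤ Real.sqrt (w (m + 1)) * ((((m : ℝ) + 1) * ((m : ℝ) + 2)) * ‖iteratedDeriv m v 0‖) := by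
            apply mul_le_mul_of_nonneg_left _ hw1
            exact mul_le_mul_of_nonneg_right hrle (norm_nonneg _)
        _ = (Real.sqrt (w (m + 1)) * (((m : ℝ) + 1) * ((m : ℝ) + 2))) * ‖iteratedDeriv m v 0‖ := by
            ring
        _ = σ * (Real.sqrt (w m) * ‖iteratedDeriv m v 0‖) := by rw [hkey]; ring
    rw [le_div_iff₀ hDpos]
    calc A (m + 1) * (C + σ) = (C + σ) * A (m + 1) := by ring
      _ ≤ B (m + 1) + Real.sqrt (w (m + 1)) * (r * ‖iteratedDeriv m v 0‖) := hmul
      _ ≤ B (m + 1) + σ * A m := by linarith [hstep]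
  exact seq_l2_bound σ C hσ hC N M hNM A B hA0 hB0 hN hrec
end
end

section
/- There exists φ₀ > 2π/3 such that for every s∈ℂ∖{0} with |arg s| < φ₀ (where arg denotes the principal argument, valued in (−π,π]) there exists σ>0 with s∈Ω_σ. -/
noncomputable section

open Filter Set MeasureTheory
open scoped ENNReal Topology

/-- There is `φ₀ > 2π/3` such that every `s ≠ 0` with `|arg s| < φ₀` lies in
`Ω_σ` for some `σ > 0`. -/
theorem statement9 :
    ∃ φ₀ : ℝ, 2 * Real.pi / 3 < φ₀ ∧
      ∀ s : ℂ, s ≠ 0 → |Complex.arg s| < φ₀ → ∃ σ : ℝ, 0 < σ ∧ s ∈ Omega σ := by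

  refine ⟨Real.arccos (-(11/20)), ?_, ?_⟩
  · have h1 : Real.cos (2 * Real.pi / 3) = -(1/2) := by
      have : 2 * Real.pi / 3 = Real.pi - Real.pi / 3 := by ring
      rw [this, Real.cos_pi_sub, Real.cos_pi_div_three]
    have h2 : Real.arccos (-(1/2)) = 2 * Real.pi / 3 := by
      rw [← h1, Real.arccos_cos (by positivity) (by nlinarith [Real.pi_pos])]
    calc 2 * Real.pi / 3 = Real.arccos (-(1/2)) := h2.symm
      _ < Real.arccos (-(11/20)) := by
          exact Real.strictAntiOn_arccos (by norm_num) (by norm_num) (by norm_num)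
  · intro s hs harg
    set r := ‖s‖ with hrdef
    have hr : 0 < r := norm_pos_iff.mpr hs
    have hcos : Real.cos (Complex.arg s) = s.re / r := Complex.cos_arg hs
    have hco : -(11/20) < Real.cos (Complex.arg s) := by
      have h1 : Real.cos (Real.arccos (-(11/20))) = -(11/20) :=
        Real.cos_arccos (by norm_num) (by norm_num)
      have h2 : Real.cos (Real.arccos (-(11/20))) < Real.cos |Complex.arg s| := by
        apply Real.cos_lt_cos_of_nonneg_of_le_pi (abs_nonneg _) (Real.arccos_le_pi _) harg
      rw [h1, Real.cos_abs] at h2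
      exact h2
    have hre : -(11/20) * r < s.re := by
      rw [hcos] at hco
      have := (lt_div_iff₀ hr).mp hco
      linarith
    have hre' : s.re ≤ r := Complex.re_le_norm s
    have him : s.re ^ 2 + s.im ^ 2 = r ^ 2 := by
      rw [hrdef, Complex.sq_norm, Complex.normSq_apply]; ring
    refine ⟨3/10 * r, by positivity, ?_, ?_⟩
    · -- Omega1
      rcases le_or_gt s.re 0 with h | h
      · left
        refine ⟨h, ?_⟩
        have h1 : (3/10 * r) ^ 2 < s.im ^ 2 := by nlinarith
        have h2 : (3/10 * r) ^ 2 < |s.im| ^ 2 := by rwa [sq_abs]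
        nlinarith [abs_nonneg s.im]
      · right
        exact ⟨h, by nlinarith⟩
    · -- Omega2 or Omega3
      rcases le_or_gt 0 s.re with h | h
      · left
        constructor
        · nlinarith
        · have hnum : -s.re * r ≤ 0 := by nlinarith
          have hden : 0 < 2 * (r + s.re) := by nlinarith
          have := div_nonpos_of_nonpos_of_nonneg hnum (le_of_lt hden)
          calc -s.re * ‖s‖ / (2 * (‖s‖ + s.re)) ≤ 0 := this
            _ < 3/10 * r := by positivity
      · right
        refine ⟨hs, ?_⟩
        have hkey : 3/10 * r * (r - 3/10 * r + s.re)
            - (3/10 * r * (1 + s.re / r) + s.re / 2) ^ 2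
            = (12 * r^2 - 18 * r * s.re - 64 * s.re^2) / 100 := by
          field_simp
          ring
        rw [← hrdef]
        rw [hkey]
        have : 0 < 12 * r^2 - 18 * r * s.re - 64 * s.re^2 := by
          nlinarith [mul_pos hr hr, mul_nonneg (le_of_lt hr) (neg_nonneg.mpr (le_of_lt h)),
            mul_nonneg (le_of_lt (sub_pos.mpr hre)) (neg_nonneg.mpr (le_of_lt h))]
        positivity
end
end

section
/- There exists φ₁ > π/2 such that for every s∈ℂ∖{0} with π/2 < |arg s| < φ₁ (where arg denotes the principal argument, valued in (−π,π]) there exists σ>0 with s∈Ω_σ and σ < (Re √s)^2, where √s denotes the principal branch of the square root (the branch with Re √s > 0 for s off the negative real axis). -/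
noncomputable section

open Filter Set MeasureTheory
open scoped ENNReal Topology

lemma sqrt_re_sq (s : ℂ) (hs : s ≠ 0) :
    (s ^ ((1:ℂ)/2)).re ^ 2 = (‖s‖ + s.re) / 2 := by
  rw [Complex.cpow_def_of_ne_zero hs]
  rw [Complex.exp_re]
  have h1 : (Complex.log s * (1/2)).re = Real.log (‖s‖) / 2 := by
    simp [Complex.mul_re, Complex.log_re]; ring
  have h2 : (Complex.log s * (1/2)).im = Complex.arg s / 2 := by
    simp [Complex.mul_im, Complex.log_im]; ring
  rw [h1, h2]
  have ha : 0 < ‖s‖ := norm_pos_iff.mpr hs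
  have he : Real.exp (Real.log (‖s‖) / 2) ^ 2 = ‖s‖ := by
    rw [← Real.exp_nat_mul]
    norm_num
    rw [show (2:ℝ) * (Real.log (‖s‖) / 2) = Real.log (‖s‖) by ring,
      Real.exp_log ha]
  have hc : Real.cos (Complex.arg s / 2) ^ 2 = 1/2 + Real.cos (Complex.arg s) / 2 := by
    rw [Real.cos_sq]; ring_nf
  have hcos : Real.cos (Complex.arg s) = s.re / ‖s‖ := Complex.cos_arg hs
  rw [mul_pow, he, hc, hcos]
  field_simp

/-- There is `φ₁ > π/2` such that every `s ≠ 0` with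
`π/2 < |arg s| < φ₁` lies in `Ω_σ` for some `σ > 0` with `σ < (Re √s)²`
(principal square root). -/
theorem statement17 :
    ∃ φ₁ : ℝ, Real.pi / 2 < φ₁ ∧
      ∀ s : ℂ, s ≠ 0 → Real.pi / 2 < |Complex.arg s| → |Complex.arg s| < φ₁ →
        ∃ σ : ℝ, 0 < σ ∧ s ∈ Omega σ ∧ σ < (s ^ ((1:ℂ)/2)).re ^ 2 := by
  refine ⟨Real.arccos (-(1/4)), ?_, ?_⟩
  · rw [Real.arccos]
    have : Real.arcsin (-(1/4)) < 0 := by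
      rw [Real.arcsin_lt_zero]; norm_num
    linarith
  · intro s hs h1 h2
    set a := ‖s‖ with ha_def
    have ha : 0 < a := norm_pos_iff.mpr hs
    -- Re s ≤ 0
    have hre : s.re ≤ 0 := by
      by_contra h
      push_neg at h
      have := Complex.abs_arg_lt_pi_div_two_iff.mpr (Or.inl h)
      linarith
    -- cos(arg s) > -1/4, so s.re > -a/4
    have hcosgt : -(1/4 : ℝ) < Real.cos |Complex.arg s| := by
      have hle : Real.arccos (-(1/4)) ≤ Real.pi := Real.arccos_le_pi _
      have := Real.cos_lt_cos_of_nonneg_of_le_pi (abs_nonneg _) hle h2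
      rwa [Real.cos_arccos (by norm_num) (by norm_num)] at this
    rw [Real.cos_abs, Complex.cos_arg hs, ← ha_def] at hcosgt
    have hx : -(a/4) < s.re := by
      have h' : -(1/4 : ℝ) * a < s.re / a * a := (mul_lt_mul_iff_left₀ ha).mpr hcosgt
      rw [div_mul_cancel₀ _ (ne_of_gt ha)] at h'
      linarith
    have hax : 0 < a + s.re := by linarith
    refine ⟨(a + s.re) / 4, by linarith, ⟨?_, Or.inl ?_⟩, ?_⟩
    · left
      refine ⟨hre, ?_⟩
      have him2 : s.im ^ 2 = a ^ 2 - s.re ^ 2 := by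
        have := Complex.sq_norm s
        rw [Complex.normSq_apply] at this
        nlinarith
      have hsq : ((a + s.re) / 4) ^ 2 < |s.im| ^ 2 := by
        rw [sq_abs, him2]; nlinarith
      exact lt_of_pow_lt_pow_left₀ 2 (abs_nonneg _) hsq
    · constructor
      · show (a + s.re) / 4 < a + s.re
        linarith
      · show -s.re * a / (2 * (a + s.re)) < (a + s.re) / 4
        rw [div_lt_div_iff₀ (by linarith) (by norm_num)]
        nlinarith
    · rw [sqrt_re_sq s hs, ← ha_def]
      linarith
end
end

section
/- Fix σ>0 and s∈ℂ with Re s < 0 and σ < (Re √s)^2, where √s denotes the principal branch of the square root (so Re √s > 0). Let (H_k)_{k≥1} be a sequence of complex numbers with sup_{k≥1} |H_k| e^{2 Re(√s) √k} < ∞. Then the power series u(x) := Σ_{k=1}^∞ H_k (1−x)^k and all its term-by-term derivatives converge uniformly on [0,1]; the resulting function u belongs to C^∞([0,1];ℂ), satisfies u(1)=0, and satisfies ‖u‖_{X^σ} < ∞, i.e. u∈X^σ. -/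
noncomputable section

open Filter Set MeasureTheory
open scoped ENNReal Topology

namespace St18

lemma iteratedDeriv_const_fun {F : Type*} [NormedAddCommGroup F] [NormedSpace ℝ F]
    (n : ℕ) (c : F) :
    iteratedDeriv (n + 1) (fun _ : ℝ => c) = fun _ => 0 := by
  induction n with
  | zero => rw [iteratedDeriv_one]; exact deriv_const' c
  | succ n IH => rw [iteratedDeriv_succ, IH]; exact deriv_const' 0

lemma two_mul_factorial_le (n : ℕ) :
    (((2 * n).factorial : ℝ)) ≤ 4 ^ n * (n.factorial : ℝ) ^ 2 := by
  have hsub : 2 * n - n = n := by omega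
  have h1 : (2 * n).choose n * (n.factorial * n.factorial) = (2 * n).factorial := by
    have := Nat.choose_mul_factorial_mul_factorial (show n ≤ 2 * n by omega)
    rw [hsub] at this
    rw [← mul_assoc]
    exact this
  have h3 : (2 * n).choose n ≤ 4 ^ n := by
    calc (2 * n).choose n ≤ ∑ i ∈ Finset.range (2 * n + 1), (2 * n).choose i :=
          Finset.single_le_sum (fun i _ => Nat.zero_le _)
            (Finset.mem_range.2 (by omega))
      _ = 2 ^ (2 * n) := Nat.sum_range_choose (2 * n)
      _ = 4 ^ n := by rw [pow_mul]; norm_num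
  have := h1 ▸ (Nat.mul_le_mul_right (n.factorial * n.factorial) h3)
  calc ((2 * n).factorial : ℝ) ≤ ((4 ^ n * (n.factorial * n.factorial) : ℕ) : ℝ) := by
        exact_mod_cast this
    _ = 4 ^ n * (n.factorial : ℝ) ^ 2 := by push_cast; ring

lemma pow_mul_exp_neg_le {b : ℝ} (hb : 0 < b) (n : ℕ) {t : ℝ} (ht : 0 ≤ t) :
    t ^ n * Real.exp (-(2 * b * Real.sqrt t)) ≤ (n.factorial : ℝ) ^ 2 / b ^ (2 * n) := by
  set X : ℝ := 2 * b * Real.sqrt t with hX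
  have hX0 : 0 ≤ X := by positivity
  have h1 : X ^ (2 * n) / (((2 * n).factorial : ℝ)) ≤ Real.exp X :=
    Real.pow_div_factorial_le_exp X hX0 (2 * n)
  have h2 : X ^ (2 * n) = 4 ^ n * (b ^ (2 * n) * t ^ n) := by
    have hsq : X ^ 2 = 4 * b ^ 2 * t := by
      rw [hX, mul_pow, mul_pow, Real.sq_sqrt ht]; ring
    rw [pow_mul, hsq, mul_pow, mul_pow, ← pow_mul]
    ring
  have hfac : (((2 * n).factorial : ℝ)) ≤ 4 ^ n * (n.factorial : ℝ) ^ 2 := two_mul_factorial_le n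
  have hexp : (0:ℝ) < Real.exp X := Real.exp_pos X
  have h3 : X ^ (2 * n) ≤ ((2 * n).factorial : ℝ) * Real.exp X := by
    rw [div_le_iff₀ (by positivity : (0:ℝ) < ((2*n).factorial : ℝ))] at h1
    linarith [h1]
  have h4 : (4:ℝ) ^ n * (b ^ (2 * n) * t ^ n) ≤ 4 ^ n * ((n.factorial : ℝ) ^ 2 * Real.exp X) := by
    rw [← h2]
    calc X ^ (2*n) ≤ ((2 * n).factorial : ℝ) * Real.exp X := h3
      _ ≤ (4 ^ n * (n.factorial : ℝ) ^ 2) * Real.exp X := by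
          exact mul_le_mul_of_nonneg_right hfac hexp.le
      _ = 4 ^ n * ((n.factorial : ℝ) ^ 2 * Real.exp X) := by ring
  have h5 : b ^ (2 * n) * t ^ n ≤ (n.factorial : ℝ) ^ 2 * Real.exp X :=
    le_of_mul_le_mul_left (by linarith [h4]) (by positivity : (0:ℝ) < 4 ^ n)
  rw [Real.exp_neg, ← div_eq_mul_inv,
    div_le_div_iff₀ (Real.exp_pos X) (by positivity : (0:ℝ) < b ^ (2 * n))]
  nlinarith [h5]

lemma summable_pow_mul_exp {c : ℝ} (hc : 0 < c) (p : ℕ) :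
    Summable (fun k : ℕ => (k : ℝ) ^ p * Real.exp (-(c * Real.sqrt k))) := by
  rw [← summable_nat_add_iff 1]
  have hS : Summable (fun k : ℕ =>
      ((((p + 2).factorial : ℝ)) ^ 2 / (c / 2) ^ (2 * (p + 2))) * (1 / ((k : ℝ) + 1) ^ 2)) := by
    apply Summable.mul_left
    have h0 : Summable (fun n : ℕ => 1 / (n : ℝ) ^ 2) :=
      Real.summable_one_div_nat_pow.2 one_lt_two
    have := (summable_nat_add_iff (f := fun n : ℕ => 1 / (n : ℝ) ^ 2) 1).2 h0
    apply this.congr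
    intro n; push_cast; ring
  apply Summable.of_nonneg_of_le (fun k => by positivity) _ hS
  intro k
  have htpos : (0:ℝ) < (k : ℝ) + 1 := by positivity
  have key := pow_mul_exp_neg_le (b := c / 2) (by linarith) (p + 2)
    (le_of_lt htpos)
  rw [show 2 * (c / 2) = c by ring] at key
  have hE : (0:ℝ) < Real.exp (-(c * Real.sqrt ((k:ℝ) + 1))) := Real.exp_pos _
  have hpow : ((k:ℝ) + 1) ^ (p + 2) = ((k:ℝ) + 1) ^ p * ((k:ℝ) + 1) ^ 2 := by
    rw [pow_add]
  push_cast
  rw [mul_one_div, le_div_iff₀ (pow_pos htpos 2)]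
  nlinarith [key, hE, hpow, pow_pos htpos p, pow_pos htpos 2]

lemma smoothTransition_iD_bound (j : ℕ) :
    ∃ B : ℝ, 1 ≤ B ∧ ∀ t : ℝ, ‖iteratedDeriv j Real.smoothTransition t‖ ≤ B := by
  have hcd : ContDiff ℝ (⊤ : ℕ∞) Real.smoothTransition := Real.smoothTransition.contDiff
  have hcont : Continuous (iteratedDeriv j Real.smoothTransition) :=
    hcd.continuous_iteratedDeriv j (by exact_mod_cast le_top)
  obtain ⟨x₀, -, hx₀⟩ := isCompact_Icc.exists_isMaxOn
    (nonempty_Icc.2 (by norm_num : (-1:ℝ) ≤ 2))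
    ((continuous_norm.comp hcont).continuousOn)
  rw [isMaxOn_iff] at hx₀
  refine ⟨max ‖iteratedDeriv j Real.smoothTransition x₀‖ 1, le_max_right _ _, fun t => ?_⟩
  rcases lt_or_ge t (-1) with h | h
  · have hev : Real.smoothTransition =ᶠ[𝓝 t] (fun _ => (0:ℝ)) :=
      Filter.eventuallyEq_of_mem (Iio_mem_nhds (by linarith : t < 0))
        (fun y hy => Real.smoothTransition.zero_of_nonpos (le_of_lt hy))
    rw [hev.iteratedDeriv_eq j]
    cases j with
    | zero => simp
    | succ m =>
        rw [iteratedDeriv_const_fun m (0:ℝ)]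
        simp
  rcases le_or_gt t 2 with h2 | h2
  · exact le_trans (hx₀ t ⟨h, h2⟩) (le_max_left _ _)
  · have hev : Real.smoothTransition =ᶠ[𝓝 t] (fun _ => (1:ℝ)) :=
      Filter.eventuallyEq_of_mem (Ioi_mem_nhds (by linarith : (1:ℝ) < t))
        (fun y hy => Real.smoothTransition.one_of_one_le (le_of_lt hy))
    rw [hev.iteratedDeriv_eq j]
    cases j with
    | zero => simp
    | succ m =>
        rw [iteratedDeriv_const_fun m (1:ℝ)]
        simp

lemma iteratedDeriv_one_sub_pow (m n : ℕ) :
    iteratedDeriv n (fun y : ℝ => ((1:ℂ) - (y:ℂ)) ^ m) =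
      fun x : ℝ => (-1:ℂ) ^ n * (m.descFactorial n : ℂ) * ((1:ℂ) - (x:ℂ)) ^ (m - n) := by
  induction n with
  | zero => simp
  | succ n IH =>
    rw [iteratedDeriv_succ, IH]
    funext x
    have h0 : HasDerivAt (fun y : ℝ => (y : ℂ)) 1 x := by
      exact Complex.ofRealCLM.hasDerivAt (x := x)
    have h1 : HasDerivAt (fun y : ℝ => (1:ℂ) - (y:ℂ)) (-1) x := by
      simpa using h0.const_sub (1:ℂ)
    have hz : HasDerivAt (fun z : ℂ => ((1:ℂ) - z) ^ (m - n))
        (((m - n : ℕ) : ℂ) * ((1:ℂ) - (x:ℂ)) ^ (m - n - 1) * (-1)) (x : ℂ) := by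
      exact ((hasDerivAt_id (x:ℂ)).const_sub (1:ℂ)).pow (m - n)
    have h2 : HasDerivAt (fun y : ℝ => ((1:ℂ) - (y:ℂ)) ^ (m - n))
        (((m - n : ℕ) : ℂ) * ((1:ℂ) - (x:ℂ)) ^ (m - n - 1) * (-1)) x := hz.comp_ofReal
    have h3 := (h2.const_mul ((-1:ℂ) ^ n * (m.descFactorial n : ℂ))).deriv
    rw [h3]
    have hc : (m.descFactorial (n + 1) : ℂ) = ((m - n : ℕ) : ℂ) * (m.descFactorial n : ℂ) := by
      rw [Nat.descFactorial_succ]; push_cast; ring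
    rw [hc, show m - (n + 1) = m - n - 1 from (Nat.sub_sub m n 1).symm]
    ring

lemma re_cpow_half_nonneg {s : ℂ} (hs : s ≠ 0) : 0 ≤ (s ^ ((1:ℂ)/2)).re := by
  rw [Complex.cpow_def_of_ne_zero hs, Complex.exp_re]
  apply mul_nonneg (Real.exp_pos _).le
  apply Real.cos_nonneg_of_mem_Icc
  have him : (Complex.log s * ((1:ℂ)/2)).im = s.arg / 2 := by
    simp [Complex.mul_im, Complex.log_im]
    ring
  rw [him]
  have h1 := Complex.neg_pi_lt_arg s
  have h2 := Complex.arg_le_pi s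
  constructor <;> [linarith; linarith]

lemma summable_succ_pow_mul_geom {r : ℝ} (h0 : 0 < r) (h1 : r < 1) (p : ℕ) :
    Summable (fun n : ℕ => ((n : ℝ) + 1) ^ p * r ^ n) := by
  have h := summable_pow_mul_geometric_of_norm_lt_one (R := ℝ) p
    (r := r) (by rwa [Real.norm_eq_abs, abs_of_pos h0])
  have h2 := (summable_nat_add_iff 1).2 h
  have h3 := h2.mul_left r⁻¹
  apply h3.congr
  intro n
  have : r ≠ 0 := ne_of_gt h0
  push_cast
  field_simp
  ring

def Bst (j : ℕ) : ℝ := (smoothTransition_iD_bound j).choose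

lemma one_le_Bst (j : ℕ) : 1 ≤ Bst j := (smoothTransition_iD_bound j).choose_spec.1

lemma Bst_nonneg (j : ℕ) : 0 ≤ Bst j := le_trans zero_le_one (one_le_Bst j)

lemma Bst_bound (j : ℕ) (t : ℝ) : ‖iteratedDeriv j Real.smoothTransition t‖ ≤ Bst j :=
  (smoothTransition_iD_bound j).choose_spec.2 t

lemma iteratedDeriv_st_affine (c d : ℝ) (j : ℕ) :
    iteratedDeriv j (fun x : ℝ => Real.smoothTransition (c * x + d)) =
      fun x => c ^ j * iteratedDeriv j Real.smoothTransition (c * x + d) := by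
  have hf : ContDiff ℝ (j : ℕ∞) (fun y : ℝ => Real.smoothTransition (y + d)) :=
    Real.smoothTransition.contDiff.comp (contDiff_id.add contDiff_const)
  have h2 := iteratedDeriv_comp_add_const j Real.smoothTransition d
  calc iteratedDeriv j (fun x : ℝ => Real.smoothTransition (c * x + d))
      = iteratedDeriv j (fun x : ℝ => (fun y => Real.smoothTransition (y + d)) (c * x)) := rfl
    _ = fun x => c ^ j * iteratedDeriv j (fun y => Real.smoothTransition (y + d)) (c * x) :=
        iteratedDeriv_comp_const_mul hf c
    _ = fun x => c ^ j * iteratedDeriv j Real.smoothTransition (c * x + d) := by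
        funext x; rw [h2]

/-- left cutoff -/
def chi1 (k : ℕ) : ℝ → ℝ := fun x => Real.smoothTransition (2 * ((k : ℝ) + 1) ^ 2 * x + 2)

/-- right cutoff -/
def chi2 : ℝ → ℝ := fun x => Real.smoothTransition ((-4) * x + 6)

lemma chi1_contDiff (k : ℕ) : ContDiff ℝ (⊤ : ℕ∞) (chi1 k) :=
  Real.smoothTransition.contDiff.comp ((contDiff_const.mul contDiff_id).add contDiff_const)

lemma chi2_contDiff : ContDiff ℝ (⊤ : ℕ∞) chi2 :=
  Real.smoothTransition.contDiff.comp ((contDiff_const.mul contDiff_id).add contDiff_const)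

lemma chi1_iD_bound (k j : ℕ) (t : ℝ) :
    ‖iteratedDeriv j (chi1 k) t‖ ≤ (2 * ((k : ℝ) + 1) ^ 2) ^ j * Bst j := by
  have h := iteratedDeriv_st_affine (2 * ((k : ℝ) + 1) ^ 2) 2 j
  have : iteratedDeriv j (chi1 k) t
      = (2 * ((k : ℝ) + 1) ^ 2) ^ j *
        iteratedDeriv j Real.smoothTransition (2 * ((k : ℝ) + 1) ^ 2 * t + 2) := by
    rw [show chi1 k = fun x => Real.smoothTransition (2 * ((k : ℝ) + 1) ^ 2 * x + 2) from rfl, h]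
  rw [this, norm_mul, norm_pow, Real.norm_eq_abs,
    abs_of_nonneg (by positivity : (0:ℝ) ≤ 2 * ((k : ℝ) + 1) ^ 2)]
  exact mul_le_mul_of_nonneg_left (Bst_bound j _) (by positivity)

lemma chi2_iD_bound (j : ℕ) (t : ℝ) :
    ‖iteratedDeriv j chi2 t‖ ≤ 4 ^ j * Bst j := by
  have h := iteratedDeriv_st_affine (-4) 6 j
  have : iteratedDeriv j chi2 t
      = (-4 : ℝ) ^ j * iteratedDeriv j Real.smoothTransition ((-4) * t + 6) := by
    rw [show chi2 = fun x => Real.smoothTransition ((-4) * x + 6) from rfl, h]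
  rw [this, norm_mul, norm_pow, Real.norm_eq_abs, abs_neg]
  have : |(4:ℝ)| = 4 := abs_of_nonneg (by norm_num)
  rw [this]
  exact mul_le_mul_of_nonneg_left (Bst_bound j _) (by positivity)

/-- complex-valued cutoffs -/
def c1 (k : ℕ) : ℝ → ℂ := fun x => ((chi1 k x : ℝ) : ℂ)
def c2 : ℝ → ℂ := fun x => ((chi2 x : ℝ) : ℂ)

lemma c1_contDiff (k : ℕ) : ContDiff ℝ (⊤ : ℕ∞) (c1 k) :=
  Complex.ofRealCLM.contDiff.comp (chi1_contDiff k)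

lemma c2_contDiff : ContDiff ℝ (⊤ : ℕ∞) c2 :=
  Complex.ofRealCLM.contDiff.comp chi2_contDiff

lemma c1_iFD_bound (k j : ℕ) (x : ℝ) :
    ‖iteratedFDeriv ℝ j (c1 k) x‖ ≤ (2 * ((k : ℝ) + 1) ^ 2) ^ j * Bst j := by
  have he : c1 k = Complex.ofRealLI ∘ chi1 k := rfl
  rw [he, Complex.ofRealLI.norm_iteratedFDeriv_comp_left ((chi1_contDiff k).contDiffAt (x := x))
    (by exact_mod_cast le_top), norm_iteratedFDeriv_eq_norm_iteratedDeriv]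
  exact chi1_iD_bound k j x

lemma c2_iFD_bound (j : ℕ) (x : ℝ) :
    ‖iteratedFDeriv ℝ j c2 x‖ ≤ 4 ^ j * Bst j := by
  have he : c2 = Complex.ofRealLI ∘ chi2 := rfl
  rw [he, Complex.ofRealLI.norm_iteratedFDeriv_comp_left (chi2_contDiff.contDiffAt (x := x))
    (by exact_mod_cast le_top), norm_iteratedFDeriv_eq_norm_iteratedDeriv]
  exact chi2_iD_bound j x

def Qc (n : ℕ) : ℝ :=
  ∑ i ∈ Finset.range (n + 1), (n.choose i : ℝ) * Bst i * (4 ^ (n - i) * Bst (n - i))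

lemma Qc_nonneg (n : ℕ) : 0 ≤ Qc n :=
  Finset.sum_nonneg fun i _ => by
    have := Bst_nonneg i; have := Bst_nonneg (n - i); positivity

def Rc (n : ℕ) : ℝ := ∑ i ∈ Finset.range (n + 1), (n.choose i : ℝ) * Qc (n - i)

lemma Rc_nonneg (n : ℕ) : 0 ≤ Rc n :=
  Finset.sum_nonneg fun i _ => by have := Qc_nonneg (n - i); positivity

lemma chiprod_iFD_bound (k j : ℕ) (x : ℝ) :
    ‖iteratedFDeriv ℝ j (fun y => c1 k y * c2 y) x‖ ≤ (2 * ((k : ℝ) + 1) ^ 2) ^ j * Qc j := by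
  have hm1 : (1:ℝ) ≤ 2 * ((k : ℝ) + 1) ^ 2 := by nlinarith [sq_nonneg ((k:ℝ)+1), Nat.cast_nonneg (α := ℝ) k]
  calc ‖iteratedFDeriv ℝ j (fun y => c1 k y * c2 y) x‖
      ≤ ∑ i ∈ Finset.range (j + 1), (j.choose i : ℝ) *
          ‖iteratedFDeriv ℝ i (c1 k) x‖ * ‖iteratedFDeriv ℝ (j - i) c2 x‖ :=
        norm_iteratedFDeriv_mul_le (c1_contDiff k) c2_contDiff x (by exact_mod_cast le_top)
    _ ≤ ∑ i ∈ Finset.range (j + 1), (j.choose i : ℝ) *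
          ((2 * ((k : ℝ) + 1) ^ 2) ^ i * Bst i) * (4 ^ (j - i) * Bst (j - i)) := by
        apply Finset.sum_le_sum
        intro i _
        have h1 := c1_iFD_bound k i x
        have h2 := c2_iFD_bound (j - i) x
        have hn1 : (0:ℝ) ≤ ‖iteratedFDeriv ℝ i (c1 k) x‖ := norm_nonneg _
        have hn2 : (0:ℝ) ≤ ‖iteratedFDeriv ℝ (j - i) c2 x‖ := norm_nonneg _
        have hc : (0:ℝ) ≤ (j.choose i : ℝ) := Nat.cast_nonneg _
        calc (j.choose i : ℝ) * ‖iteratedFDeriv ℝ i (c1 k) x‖ * ‖iteratedFDeriv ℝ (j - i) c2 x‖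
            ≤ (j.choose i : ℝ) * ((2 * ((k : ℝ) + 1) ^ 2) ^ i * Bst i) *
              ‖iteratedFDeriv ℝ (j - i) c2 x‖ := by
              apply mul_le_mul_of_nonneg_right _ hn2
              exact mul_le_mul_of_nonneg_left h1 hc
          _ ≤ (j.choose i : ℝ) * ((2 * ((k : ℝ) + 1) ^ 2) ^ i * Bst i) * (4 ^ (j - i) * Bst (j - i)) := by
              apply mul_le_mul_of_nonneg_left h2
              have := Bst_nonneg i
              positivity
    _ ≤ ∑ i ∈ Finset.range (j + 1), (2 * ((k : ℝ) + 1) ^ 2) ^ j *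
          ((j.choose i : ℝ) * Bst i * (4 ^ (j - i) * Bst (j - i))) := by
        apply Finset.sum_le_sum
        intro i hi
        have hij : i ≤ j := Nat.lt_succ_iff.mp (Finset.mem_range.mp hi)
        have hpow : (2 * ((k : ℝ) + 1) ^ 2) ^ i ≤ (2 * ((k : ℝ) + 1) ^ 2) ^ j :=
          pow_le_pow_right₀ hm1 hij
        have h0 : (0:ℝ) ≤ (j.choose i : ℝ) * Bst i * (4 ^ (j - i) * Bst (j - i)) := by
          have := Bst_nonneg i; have := Bst_nonneg (j - i); positivity
        calc (j.choose i : ℝ) * ((2 * ((k : ℝ) + 1) ^ 2) ^ i * Bst i) * (4 ^ (j - i) * Bst (j - i))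
            = (2 * ((k : ℝ) + 1) ^ 2) ^ i * ((j.choose i : ℝ) * Bst i * (4 ^ (j - i) * Bst (j - i))) := by
              ring
          _ ≤ (2 * ((k : ℝ) + 1) ^ 2) ^ j * ((j.choose i : ℝ) * Bst i * (4 ^ (j - i) * Bst (j - i))) :=
              mul_le_mul_of_nonneg_right hpow h0
    _ = (2 * ((k : ℝ) + 1) ^ 2) ^ j * Qc j := by
        rw [Qc, ← Finset.mul_sum]

lemma iteratedDeriv_const_mul_complex (c : ℂ) {f : ℝ → ℂ} (hf : ContDiff ℝ (⊤ : ℕ∞) f) (n : ℕ) :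
    iteratedDeriv n (fun y => c * f y) = fun x => c * iteratedDeriv n f x := by
  induction n generalizing f with
  | zero => simp
  | succ n IH =>
    rw [iteratedDeriv_succ', iteratedDeriv_succ']
    have hder : deriv (fun y => c * f y) = fun y => c * deriv f y := by
      funext y
      exact deriv_const_mul c (hf.differentiable (by simp)).differentiableAt
    rw [hder]
    exact IH (contDiff_infty_iff_deriv.mp hf).2


def gfun (H : ℕ → ℂ) (k : ℕ) : ℝ → ℂ := fun x => H (k + 1) * ((1:ℂ) - (x:ℂ)) ^ (k + 1)

def fterm (H : ℕ → ℂ) (k : ℕ) : ℝ → ℂ := fun x => gfun H k x * (c1 k x * c2 x)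

lemma onesubpow_contDiff (m : ℕ) : ContDiff ℝ (⊤ : ℕ∞) (fun y : ℝ => ((1:ℂ) - (y:ℂ)) ^ m) :=
  (contDiff_const.sub Complex.ofRealCLM.contDiff).pow m

lemma gfun_contDiff (H : ℕ → ℂ) (k : ℕ) : ContDiff ℝ (⊤ : ℕ∞) (gfun H k) :=
  contDiff_const.mul (onesubpow_contDiff (k + 1))

lemma fterm_contDiff (H : ℕ → ℂ) (k : ℕ) : ContDiff ℝ (⊤ : ℕ∞) (fterm H k) :=
  (gfun_contDiff H k).mul ((c1_contDiff k).mul c2_contDiff)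

lemma gfun_iD (H : ℕ → ℂ) (k n : ℕ) :
    iteratedDeriv n (gfun H k) = fun x : ℝ =>
      H (k + 1) * ((-1:ℂ) ^ n * ((k + 1).descFactorial n : ℂ) * ((1:ℂ) - (x:ℂ)) ^ (k + 1 - n)) := by
  have := iteratedDeriv_const_mul_complex (H (k + 1)) (onesubpow_contDiff (k + 1)) n
  rw [show gfun H k = fun y : ℝ => H (k+1) * ((1:ℂ) - (y:ℂ)) ^ (k+1) from rfl, this,
    iteratedDeriv_one_sub_pow]

lemma norm_one_sub_ofReal (x : ℝ) : ‖(1:ℂ) - (x:ℂ)‖ = |1 - x| := by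
  rw [show (1:ℂ) - (x:ℂ) = ((1 - x : ℝ) : ℂ) by push_cast; ring, Complex.norm_real,
    Real.norm_eq_abs]

/-- Norm of iterated derivative of `gfun` on the slab. -/
lemma gfun_iD_bound (H : ℕ → ℂ) (k i : ℕ) {x : ℝ}
    (hx : x ∈ Icc (-((((k:ℝ)+1) ^ 2)⁻¹)) (3/2)) :
    ‖iteratedFDeriv ℝ i (gfun H k) x‖ ≤ 3 * ‖H (k + 1)‖ * ((k : ℝ) + 1) ^ i := by
  set m : ℝ := (k : ℝ) + 1 with hm
  have hm1 : (1:ℝ) ≤ m := by rw [hm]; linarith [Nat.cast_nonneg (α := ℝ) k]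
  have hm0 : (0:ℝ) < m := lt_of_lt_of_le zero_lt_one hm1
  rw [norm_iteratedFDeriv_eq_norm_iteratedDeriv, gfun_iD]
  have hd : (((k + 1).descFactorial i : ℝ)) ≤ m ^ i := by
    calc (((k + 1).descFactorial i : ℝ)) ≤ (((k + 1) ^ i : ℕ) : ℝ) := by
          exact_mod_cast Nat.descFactorial_le_pow (k + 1) i
      _ = m ^ i := by push_cast [hm]; ring
  have habs : |1 - x| ≤ 1 + (m ^ 2)⁻¹ := by
    obtain ⟨h1, h2⟩ := hx
    rw [abs_le]
    refine ⟨by nlinarith [inv_nonneg.mpr (sq_nonneg m)], by nlinarith [inv_nonneg.mpr (sq_nonneg m)]⟩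
  have hpow : |1 - x| ^ (k + 1 - i) ≤ 3 := by
    have h1 : |1 - x| ^ (k + 1 - i) ≤ (1 + (m ^ 2)⁻¹) ^ (k + 1 - i) :=
      pow_le_pow_left₀ (abs_nonneg _) habs _
    have h2 : (1 + (m ^ 2)⁻¹) ^ (k + 1 - i) ≤ (1 + (m ^ 2)⁻¹) ^ (k + 1) :=
      pow_le_pow_right₀ (le_add_of_nonneg_right (by positivity)) (Nat.sub_le _ _)
    have h3 : (1 + (m ^ 2)⁻¹) ^ (k + 1) ≤ Real.exp ((m ^ 2)⁻¹) ^ (k + 1) := by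
      apply pow_le_pow_left₀ (by positivity)
      have := Real.add_one_le_exp ((m ^ 2)⁻¹)
      linarith
    have h4 : Real.exp ((m ^ 2)⁻¹) ^ (k + 1) = Real.exp (((k:ℝ) + 1) * (m ^ 2)⁻¹) := by
      rw [← Real.exp_nat_mul]
      congr 1
      push_cast
      ring
    have h5 : ((k:ℝ) + 1) * (m ^ 2)⁻¹ ≤ 1 := by
      rw [hm] at *
      rw [mul_inv_le_iff₀ (by positivity)]
      nlinarith
    have h6 : Real.exp (((k:ℝ) + 1) * (m ^ 2)⁻¹) ≤ Real.exp 1 := Real.exp_le_exp.mpr h5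
    have h7 : Real.exp 1 ≤ 3 := by
      have := Real.exp_one_lt_d9
      linarith
    calc |1 - x| ^ (k + 1 - i) ≤ (1 + (m ^ 2)⁻¹) ^ (k + 1) := le_trans h1 h2
      _ ≤ Real.exp ((m ^ 2)⁻¹) ^ (k + 1) := h3
      _ = Real.exp (((k:ℝ) + 1) * (m ^ 2)⁻¹) := h4
      _ ≤ 3 := le_trans h6 h7
  have key : (((k + 1).descFactorial i : ℝ)) * |1 - x| ^ (k + 1 - i) ≤ m ^ i * 3 :=
    mul_le_mul hd hpow (by positivity) (by positivity)
  have key2 : ‖H (k + 1)‖ * ((((k + 1).descFactorial i : ℝ)) * |1 - x| ^ (k + 1 - i))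
      ≤ ‖H (k + 1)‖ * (m ^ i * 3) := mul_le_mul_of_nonneg_left key (norm_nonneg _)
  have hfin : ‖H (k + 1)‖ * (m ^ i * 3) = 3 * ‖H (k + 1)‖ * m ^ i := by ring
  rw [← hfin]
  refine le_trans (le_of_eq ?_) key2
  simp only [norm_mul, norm_pow, norm_neg, norm_one, one_pow, one_mul,
    Complex.norm_natCast, norm_one_sub_ofReal]

/-- The global summable bound. -/
def ub (H : ℕ → ℂ) (n k : ℕ) : ℝ := (3 * 2 ^ n * Rc n) * ‖H (k + 1)‖ * ((k : ℝ) + 1) ^ (2 * n)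

lemma ub_nonneg (H : ℕ → ℂ) (n k : ℕ) : 0 ≤ ub H n k := by
  have := Rc_nonneg n; unfold ub; positivity

lemma fterm_eventually_zero (H : ℕ → ℂ) (k : ℕ) {x : ℝ}
    (hx : x ∉ Icc (-((((k:ℝ)+1) ^ 2)⁻¹)) (3/2)) :
    fterm H k =ᶠ[𝓝 x] fun _ => 0 := by
  rw [mem_Icc, not_and_or] at hx
  rcases hx with hx | hx
  · push_neg at hx
    refine Filter.eventuallyEq_of_mem (Iio_mem_nhds hx) (fun y hy => ?_)
    have : chi1 k y = 0 := by
      apply Real.smoothTransition.zero_of_nonpos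
      have : y < -((((k:ℝ)+1) ^ 2)⁻¹) := hy
      have hp : (0:ℝ) < ((k:ℝ)+1) ^ 2 := by positivity
      have := (mul_lt_mul_iff_right₀ (by positivity : (0:ℝ) < 2 * ((k:ℝ)+1)^2)).2 this
      rw [mul_neg] at this
      have h2 : 2 * ((k:ℝ)+1)^2 * ((((k:ℝ)+1) ^ 2)⁻¹) = 2 := by
        field_simp
      nlinarith [this]
    simp [fterm, c1, this]
  · push_neg at hx
    refine Filter.eventuallyEq_of_mem (Ioi_mem_nhds hx) (fun y hy => ?_)
    have : chi2 y = 0 := by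
      apply Real.smoothTransition.zero_of_nonpos
      have : (3/2 : ℝ) < y := hy
      unfold chi2 at *
      nlinarith
    simp [fterm, c2, this]

lemma fterm_iFD_bound (H : ℕ → ℂ) (n k : ℕ) (x : ℝ) :
    ‖iteratedFDeriv ℝ n (fterm H k) x‖ ≤ ub H n k := by
  set m : ℝ := (k : ℝ) + 1 with hm
  have hm1 : (1:ℝ) ≤ m := by rw [hm]; linarith [Nat.cast_nonneg (α := ℝ) k]
  by_cases hx : x ∈ Icc (-((m ^ 2)⁻¹)) (3/2)
  · calc ‖iteratedFDeriv ℝ n (fterm H k) x‖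
        ≤ ∑ i ∈ Finset.range (n + 1), (n.choose i : ℝ) *
            ‖iteratedFDeriv ℝ i (gfun H k) x‖ * ‖iteratedFDeriv ℝ (n - i) (fun y => c1 k y * c2 y) x‖ :=
          norm_iteratedFDeriv_mul_le (gfun_contDiff H k) ((c1_contDiff k).mul c2_contDiff) x
            (by exact_mod_cast le_top)
      _ ≤ ∑ i ∈ Finset.range (n + 1), (n.choose i : ℝ) *
            (3 * ‖H (k + 1)‖ * m ^ i) * ((2 * m ^ 2) ^ (n - i) * Qc (n - i)) := by
          apply Finset.sum_le_sum
          intro i _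
          have h1 := gfun_iD_bound H k i hx
          have h2 := chiprod_iFD_bound k (n - i) x
          have hc : (0:ℝ) ≤ (n.choose i : ℝ) := Nat.cast_nonneg _
          calc (n.choose i : ℝ) * ‖iteratedFDeriv ℝ i (gfun H k) x‖ *
                ‖iteratedFDeriv ℝ (n - i) (fun y => c1 k y * c2 y) x‖
              ≤ (n.choose i : ℝ) * (3 * ‖H (k + 1)‖ * m ^ i) *
                ‖iteratedFDeriv ℝ (n - i) (fun y => c1 k y * c2 y) x‖ :=
                mul_le_mul_of_nonneg_right (mul_le_mul_of_nonneg_left h1 hc) (norm_nonneg _)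
            _ ≤ (n.choose i : ℝ) * (3 * ‖H (k + 1)‖ * m ^ i) * ((2 * m ^ 2) ^ (n - i) * Qc (n - i)) := by
                apply mul_le_mul_of_nonneg_left h2
                positivity
      _ ≤ ∑ i ∈ Finset.range (n + 1),
            (3 * 2 ^ n * ‖H (k + 1)‖ * m ^ (2 * n)) * ((n.choose i : ℝ) * Qc (n - i)) := by
          apply Finset.sum_le_sum
          intro i hi
          have hij : i ≤ n := Nat.lt_succ_iff.mp (Finset.mem_range.mp hi)
          have hq := Qc_nonneg (n - i)
          have hH0 : (0:ℝ) ≤ ‖H (k + 1)‖ := norm_nonneg _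
          have key : m ^ i * (2 * m ^ 2) ^ (n - i) ≤ 2 ^ n * m ^ (2 * n) := by
            rw [mul_pow]
            have e1 : (2:ℝ) ^ (n - i) ≤ 2 ^ n := pow_le_pow_right₀ one_le_two (Nat.sub_le _ _)
            have e2 : m ^ i * (m ^ 2) ^ (n - i) ≤ m ^ (2 * n) := by
              rw [← pow_mul, ← pow_add]
              apply pow_le_pow_right₀ hm1
              omega
            calc m ^ i * (2 ^ (n - i) * (m ^ 2) ^ (n - i))
                = 2 ^ (n - i) * (m ^ i * (m ^ 2) ^ (n - i)) := by ring
              _ ≤ 2 ^ n * m ^ (2 * n) := by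
                  apply mul_le_mul e1 e2 (by positivity) (by positivity)
          calc (n.choose i : ℝ) * (3 * ‖H (k + 1)‖ * m ^ i) * ((2 * m ^ 2) ^ (n - i) * Qc (n - i))
              = (3 * ‖H (k + 1)‖ * (m ^ i * (2 * m ^ 2) ^ (n - i))) * ((n.choose i : ℝ) * Qc (n - i)) := by
                ring
            _ ≤ (3 * ‖H (k + 1)‖ * (2 ^ n * m ^ (2 * n))) * ((n.choose i : ℝ) * Qc (n - i)) := by
                apply mul_le_mul_of_nonneg_right _ (by positivity)
                apply mul_le_mul_of_nonneg_left key (by positivity)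
            _ = (3 * 2 ^ n * ‖H (k + 1)‖ * m ^ (2 * n)) * ((n.choose i : ℝ) * Qc (n - i)) := by
                ring
      _ = ub H n k := by
          rw [← Finset.mul_sum]
          unfold ub Rc
          ring
  · have hev := fterm_eventually_zero H k hx
    rw [norm_iteratedFDeriv_eq_norm_iteratedDeriv, hev.iteratedDeriv_eq n]
    cases n with
    | zero => simpa using ub_nonneg H 0 k
    | succ p =>
        rw [iteratedDeriv_const_fun p (0:ℂ)]
        simpa using ub_nonneg H (p + 1) k

section seminorms

variable {σ b K : ℝ} {v : ℝ → ℂ}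

lemma gTerm_nonneg (hσ : 0 < σ) (κ : ℕ) (n : ℕ) : 0 ≤ gTerm σ κ 0 v n := by
  unfold gTerm
  have hI : 0 ≤ ∫ x in (0:ℝ)..1, (x / σ) ^ κ * ‖iteratedDeriv n v x‖ ^ 2 := by
    apply intervalIntegral.integral_nonneg (by norm_num)
    intro u hu
    exact mul_nonneg (pow_nonneg (div_nonneg hu.1 hσ.le) κ) (by positivity)
  positivity

lemma bTerm_nonneg (hσ : 0 < σ) (n : ℕ) : 0 ≤ bTerm σ v n := by
  unfold bTerm; positivity

lemma gTerm_le (hσ : 0 < σ) (hb : 0 < b) (hK : 0 ≤ K) (hv : ContDiff ℝ (⊤ : ℕ∞) v)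
    (hbd : ∀ n : ℕ, ∀ x ∈ Icc (0:ℝ) 1,
      ‖iteratedDeriv n v x‖ ≤ K * (((n + 1).factorial : ℝ)) ^ 2 / b ^ (2 * n + 2))
    (κ : ℕ) (n : ℕ) :
    gTerm σ κ 0 v n ≤ (K ^ 2 / (σ ^ κ * b ^ 4)) *
      (((n : ℝ) + 1) ^ (κ + 2) * (σ ^ 2 / b ^ 4) ^ n) := by
  have hF0 : (0:ℝ) < (n.factorial : ℝ) := by exact_mod_cast Nat.factorial_pos n
  have hG : (((n + 1).factorial : ℝ)) = ((n : ℝ) + 1) * (n.factorial : ℝ) := by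
    push_cast [Nat.factorial_succ]; ring
  set M : ℝ := K * (((n + 1).factorial : ℝ)) ^ 2 / b ^ (2 * n + 2) with hM
  have hM0 : 0 ≤ M := by rw [hM]; positivity
  have hcont : Continuous (fun x : ℝ => (x / σ) ^ κ * ‖iteratedDeriv n v x‖ ^ 2) := by
    apply Continuous.mul
    · exact (continuous_id.div_const σ).pow κ
    · exact ((hv.continuous_iteratedDeriv n (by exact_mod_cast le_top)).norm).pow 2
  have hI : (∫ x in (0:ℝ)..1, (x / σ) ^ κ * ‖iteratedDeriv n v x‖ ^ 2)
      ≤ (1 / σ) ^ κ * M ^ 2 := by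
    have hmono := intervalIntegral.integral_mono_on (a := (0:ℝ)) (b := (1:ℝ))
      (μ := volume) (by norm_num)
      (hcont.intervalIntegrable 0 1)
      (intervalIntegrable_const (c := (1 / σ) ^ κ * M ^ 2))
      (fun x hx => by
        have h1 : (x / σ) ^ κ ≤ (1 / σ) ^ κ := by
          apply pow_le_pow_left₀ (div_nonneg hx.1 hσ.le)
          rw [div_le_div_iff₀ hσ hσ]
          nlinarith [hx.2]
        have h2 : ‖iteratedDeriv n v x‖ ^ 2 ≤ M ^ 2 :=
          pow_le_pow_left₀ (norm_nonneg _) (hbd n x hx) 2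
        exact mul_le_mul h1 h2 (by positivity) (by positivity))
    simpa using hmono
  have hA : (0:ℝ) ≤ σ ^ (2 * n) / ((n.factorial : ℝ) ^ 2 * ((n + 1).factorial : ℝ) ^ 2)
      * (n : ℝ) ^ (κ + 0) := by positivity
  calc gTerm σ κ 0 v n
      ≤ σ ^ (2 * n) / ((n.factorial : ℝ) ^ 2 * ((n + 1).factorial : ℝ) ^ 2) * (n : ℝ) ^ (κ + 0)
        * ((1 / σ) ^ κ * M ^ 2) := by
        unfold gTerm
        exact mul_le_mul_of_nonneg_left hI hA
    _ = (K ^ 2 / (σ ^ κ * b ^ 4)) * ((n : ℝ) ^ κ * ((n : ℝ) + 1) ^ 2 * (σ ^ 2 / b ^ 4) ^ n) := by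
        rw [hM, hG]
        rw [Nat.add_zero]
        have hσ0 : σ ≠ 0 := ne_of_gt hσ
        have hb0 : b ≠ 0 := ne_of_gt hb
        have hF0' : (n.factorial : ℝ) ≠ 0 := ne_of_gt hF0
        field_simp
        have e1 : σ ^ κ * σ⁻¹ ^ κ = 1 := by rw [← mul_pow, mul_inv_cancel₀ hσ0, one_pow]
        have e2 : b ^ (n * 4) * b⁻¹ ^ (n * 4) = 1 := by rw [← mul_pow, mul_inv_cancel₀ hb0, one_pow]
        linear_combination (σ ^ (n * 2) * (n:ℝ) ^ κ * K ^ 2 * b ^ 4) * e1 - (σ ^ (n * 2) * (n:ℝ) ^ κ * K ^ 2 * b ^ 4) * e2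
    _ ≤ (K ^ 2 / (σ ^ κ * b ^ 4)) * (((n : ℝ) + 1) ^ (κ + 2) * (σ ^ 2 / b ^ 4) ^ n) := by
        apply mul_le_mul_of_nonneg_left _ (by positivity)
        apply mul_le_mul_of_nonneg_right _ (by positivity)
        rw [pow_add]
        apply mul_le_mul_of_nonneg_right _ (by positivity)
        exact pow_le_pow_left₀ (Nat.cast_nonneg n) (by linarith) κ

lemma bTerm_le (hσ : 0 < σ) (hb : 0 < b) (hK : 0 ≤ K)
    (hbd : ∀ n : ℕ, ∀ x ∈ Icc (0:ℝ) 1,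
      ‖iteratedDeriv n v x‖ ≤ K * (((n + 1).factorial : ℝ)) ^ 2 / b ^ (2 * n + 2))
    (n : ℕ) :
    bTerm σ v n ≤ (σ * K ^ 2 / b ^ 4) *
      (((n : ℝ) + 1) ^ 2 * (σ ^ 2 / b ^ 4) ^ n) := by
  have hF0 : (0:ℝ) < (n.factorial : ℝ) := by exact_mod_cast Nat.factorial_pos n
  have hG : (((n + 1).factorial : ℝ)) = ((n : ℝ) + 1) * (n.factorial : ℝ) := by
    push_cast [Nat.factorial_succ]; ring
  have h2 : ‖iteratedDeriv n v 0‖ ^ 2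
      ≤ (K * (((n + 1).factorial : ℝ)) ^ 2 / b ^ (2 * n + 2)) ^ 2 :=
    pow_le_pow_left₀ (norm_nonneg _) (hbd n 0 ⟨le_refl 0, by norm_num⟩) 2
  calc bTerm σ v n
      ≤ σ ^ (2 * n + 1) / ((n.factorial : ℝ) ^ 2 * ((n + 1).factorial : ℝ) ^ 2) *
        (K * (((n + 1).factorial : ℝ)) ^ 2 / b ^ (2 * n + 2)) ^ 2 := by
        unfold bTerm
        exact mul_le_mul_of_nonneg_left h2 (by positivity)
    _ = (σ * K ^ 2 / b ^ 4) * (((n : ℝ) + 1) ^ 2 * (σ ^ 2 / b ^ 4) ^ n) := by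
        rw [hG]
        have hσ0 : σ ≠ 0 := ne_of_gt hσ
        have hb0 : b ≠ 0 := ne_of_gt hb
        have hF0' : (n.factorial : ℝ) ≠ 0 := ne_of_gt hF0
        field_simp
        have e2 : b ^ (n * 4) * b⁻¹ ^ (n * 4) = 1 := by rw [← mul_pow, mul_inv_cancel₀ hb0, one_pow]
        linear_combination (-(σ * σ ^ (n * 2) * K ^ 2 * b ^ 4)) * e2

lemma fsem_ne_top (hσ : 0 < σ) (hb : 0 < b) (hσb : σ < b ^ 2) (hK : 0 ≤ K)
    (hv : ContDiff ℝ (⊤ : ℕ∞) v)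
    (hbd : ∀ n : ℕ, ∀ x ∈ Icc (0:ℝ) 1,
      ‖iteratedDeriv n v x‖ ≤ K * (((n + 1).factorial : ℝ)) ^ 2 / b ^ (2 * n + 2))
    (κ : ℕ) : fsem σ κ 0 0 v ≠ ⊤ := by
  have hr0 : (0:ℝ) < σ ^ 2 / b ^ 4 := by positivity
  have hr1 : σ ^ 2 / b ^ 4 < 1 := by
    rw [div_lt_one (by positivity)]
    nlinarith
  have hsum : Summable (fun n => gTerm σ κ 0 v n) := by
    apply Summable.of_nonneg_of_le (fun n => gTerm_nonneg hσ κ n)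
      (gTerm_le hσ hb hK hv hbd κ)
    exact (summable_succ_pow_mul_geom hr0 hr1 (κ + 2)).mul_left _
  unfold fsem
  have heq : (fun n : ℕ => if 0 ≤ n then ENNReal.ofReal (gTerm σ κ 0 v n) else 0)
      = fun n : ℕ => ENNReal.ofReal (gTerm σ κ 0 v n) := by
    funext n; rw [if_pos (Nat.zero_le n)]
  rw [heq, ← ENNReal.ofReal_tsum_of_nonneg (fun n => gTerm_nonneg hσ κ n) hsum]
  exact ENNReal.rpow_ne_top_of_nonneg (by norm_num) ENNReal.ofReal_ne_top

lemma bsem_ne_top (hσ : 0 < σ) (hb : 0 < b) (hσb : σ < b ^ 2) (hK : 0 ≤ K)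
    (hbd : ∀ n : ℕ, ∀ x ∈ Icc (0:ℝ) 1,
      ‖iteratedDeriv n v x‖ ≤ K * (((n + 1).factorial : ℝ)) ^ 2 / b ^ (2 * n + 2)) :
    bsem σ 0 v ≠ ⊤ := by
  have hr0 : (0:ℝ) < σ ^ 2 / b ^ 4 := by positivity
  have hr1 : σ ^ 2 / b ^ 4 < 1 := by
    rw [div_lt_one (by positivity)]
    nlinarith
  have hsum : Summable (fun n => bTerm σ v n) := by
    apply Summable.of_nonneg_of_le (fun n => bTerm_nonneg (v := v) hσ n) (bTerm_le hσ hb hK hbd)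
    exact (summable_succ_pow_mul_geom hr0 hr1 2).mul_left _
  unfold bsem
  have heq : (fun n : ℕ => if 0 ≤ n then ENNReal.ofReal (bTerm σ v n) else 0)
      = fun n : ℕ => ENNReal.ofReal (bTerm σ v n) := by
    funext n; rw [if_pos (Nat.zero_le n)]
  rw [heq, ← ENNReal.ofReal_tsum_of_nonneg (fun n => bTerm_nonneg (v := v) hσ n) hsum]
  exact ENNReal.rpow_ne_top_of_nonneg (by norm_num) ENNReal.ofReal_ne_top

end seminorms

/-- On the open set `O_k` the cutoffs are equal to 1. -/
lemma fterm_eqOn (H : ℕ → ℂ) (k : ℕ) :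
    Set.EqOn (fterm H k) (gfun H k) (Ioo (-(2 * ((k:ℝ)+1) ^ 2)⁻¹) (5/4)) := by
  intro y hy
  obtain ⟨hy1, hy2⟩ := hy
  have hp : (0:ℝ) < 2 * ((k:ℝ)+1) ^ 2 := by positivity
  have h1 : chi1 k y = 1 := by
    apply Real.smoothTransition.one_of_one_le
    have := (mul_lt_mul_iff_right₀ hp).2 hy1
    rw [mul_neg, mul_inv_cancel₀ (ne_of_gt hp)] at this
    nlinarith
  have h2 : chi2 y = 1 := by
    apply Real.smoothTransition.one_of_one_le
    nlinarith
  unfold fterm c1 c2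
  rw [h1, h2]
  simp

lemma Icc_subset_Ok (k : ℕ) :
    Icc (0:ℝ) 1 ⊆ Ioo (-(2 * ((k:ℝ)+1) ^ 2)⁻¹) (5/4) := by
  intro x hx
  constructor
  · have hp : (0:ℝ) < (2 * ((k:ℝ)+1) ^ 2)⁻¹ := by positivity
    linarith [hx.1]
  · linarith [hx.2]



end St18

open St18 in
/-- (Theorem `LeaverThm`, analytic core.) If `Re s < 0`,
`σ < (Re √s)²` and `sup_k |H_k| e^{2 Re(√s) √k} < ∞`, then the power series
`Σ_{k≥1} H_k (1−x)^k` and all its term-by-term derivatives converge uniformly on `[0,1]`,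
and the resulting function (extended smoothly to `ℝ`) vanishes at `1` and lies in `X^σ`. -/
theorem statement18 (σ : ℝ) (hσ : 0 < σ) (s : ℂ) (hs : s.re < 0)
    (hσs : σ < (s ^ ((1:ℂ)/2)).re ^ 2) (H : ℕ → ℂ)
    (hH : ∃ C : ℝ, ∀ k : ℕ, 1 ≤ k →
      ‖H k‖ * Real.exp (2 * (s ^ ((1:ℂ)/2)).re * Real.sqrt k) ≤ C) :
    ∃ U : ℝ → ℂ, ContDiff ℝ (⊤ : ℕ∞) U ∧ U 1 = 0 ∧
      (∀ x ∈ Set.Icc (0:ℝ) 1,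
        HasSum (fun k : ℕ => H (k + 1) * ((1 - x : ℝ) : ℂ) ^ (k + 1)) (U x)) ∧
      (∀ n : ℕ, TendstoUniformlyOn
        (fun (m : ℕ) (x : ℝ) => ∑ k ∈ Finset.range m,
          iteratedDeriv n (fun y : ℝ => H (k + 1) * ((1 - y : ℝ) : ℂ) ^ (k + 1)) x)
        (iteratedDeriv n U) Filter.atTop (Set.Icc (0:ℝ) 1)) ∧
      Xnorm σ U ≠ ⊤ := by
  -- basic setup
  have hs0 : s ≠ 0 := by
    intro h; rw [h] at hs; simp at hs
  set a : ℝ := (s ^ ((1:ℂ)/2)).re with ha_def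
  have ha0 : 0 ≤ a := re_cpow_half_nonneg hs0
  have ha : 0 < a := by
    rcases ha0.lt_or_eq with h | h
    · exact h
    · exfalso; rw [← h] at hσs; simp at hσs; linarith
  set b : ℝ := (Real.sqrt σ + a) / 2 with hb_def
  have hsq : Real.sqrt σ < a := (Real.sqrt_lt' ha).2 hσs
  have hsq0 : 0 < Real.sqrt σ := Real.sqrt_pos.2 hσ
  have hb : 0 < b := by rw [hb_def]; linarith
  have hba : b < a := by rw [hb_def]; linarith
  have hσb : σ < b ^ 2 := by
    have h1 : Real.sqrt σ < b := by rw [hb_def]; linarith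
    nlinarith [Real.sq_sqrt hσ.le]
  obtain ⟨C, hC⟩ := hH
  have hC' : ∀ k : ℕ, 1 ≤ k → ‖H k‖ ≤ C * Real.exp (-(2 * a * Real.sqrt k)) := by
    intro k hk
    have h1 := hC k hk
    have h2 : (0:ℝ) < Real.exp (-(2 * a * Real.sqrt k)) := Real.exp_pos _
    have h3 : ‖H k‖ = (‖H k‖ * Real.exp (2 * a * Real.sqrt k)) *
        Real.exp (-(2 * a * Real.sqrt k)) := by
      rw [mul_assoc, ← Real.exp_add]
      simp
    rw [h3]
    exact mul_le_mul_of_nonneg_right h1 h2.le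
  have hC0 : 0 ≤ C := le_trans (by positivity) (hC 1 le_rfl)
  -- summability of the global bounds
  have hub_sum : ∀ n : ℕ, Summable (ub H n) := by
    intro n
    have hbase : Summable (fun k : ℕ => ((k:ℝ)+1) ^ (2*n) *
        Real.exp (-(2 * a * Real.sqrt ((k:ℝ)+1)))) := by
      have h0 := (summable_nat_add_iff 1).2 (summable_pow_mul_exp
        (by positivity : (0:ℝ) < 2 * a) (2*n))
      apply h0.congr
      intro k
      push_cast
      ring_nf
    apply Summable.of_nonneg_of_le (ub_nonneg H n) _
      ((hbase.mul_left ((3 * 2 ^ n * Rc n) * C)))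
    intro k
    have h1 := hC' (k+1) (by omega)
    have h2 : ‖H (k+1)‖ ≤ C * Real.exp (-(2 * a * Real.sqrt ((k:ℝ)+1))) := by
      have : ((k+1 : ℕ):ℝ) = (k:ℝ)+1 := by push_cast; ring
      rwa [this] at h1
    have hRc := Rc_nonneg n
    calc ub H n k = (3 * 2 ^ n * Rc n) * ‖H (k + 1)‖ * ((k : ℝ) + 1) ^ (2 * n) := rfl
      _ ≤ (3 * 2 ^ n * Rc n) * (C * Real.exp (-(2 * a * Real.sqrt ((k:ℝ)+1)))) *
          ((k : ℝ) + 1) ^ (2 * n) := by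
          apply mul_le_mul_of_nonneg_right _ (by positivity)
          exact mul_le_mul_of_nonneg_left h2 (by positivity)
      _ = (3 * 2 ^ n * Rc n) * C * (((k:ℝ)+1) ^ (2*n) *
          Real.exp (-(2 * a * Real.sqrt ((k:ℝ)+1)))) := by ring
  -- the function U
  set U : ℝ → ℂ := fun x => ∑' k, fterm H k x with hU_def
  have hU_cd : ContDiff ℝ (⊤ : ℕ∞) U :=
    contDiff_tsum (fun k => fterm_contDiff H k) (fun n _ => hub_sum n)
      (fun n k x _ => fterm_iFD_bound H n k x)
  have hsumf : ∀ (n : ℕ) (x : ℝ), Summable (fun k => iteratedFDeriv ℝ n (fterm H k) x) :=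
    fun n x => Summable.of_norm_bounded (hub_sum n) (fun k => fterm_iFD_bound H n k x)
  have hiDU : ∀ (n : ℕ) (x : ℝ),
      iteratedDeriv n U x = ∑' k, iteratedDeriv n (fterm H k) x := by
    intro n x
    have h1 : iteratedFDeriv ℝ n U x = ∑' k, iteratedFDeriv ℝ n (fterm H k) x :=
      iteratedFDeriv_tsum_apply (fun k => fterm_contDiff H k) (fun m _ => hub_sum m)
        (fun m k y _ => fterm_iFD_bound H m k y) (by exact_mod_cast le_top) x
    have e := (ContinuousMultilinearMap.piFieldEquiv ℝ (Fin n) ℂ).symm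
    rw [iteratedDeriv_eq_iteratedFDeriv, h1]
    have h2 := ContinuousLinearMap.map_tsum
      ((ContinuousMultilinearMap.apply ℝ (fun _ : Fin n => ℝ) ℂ (fun _ => (1:ℝ))))
      (hsumf n x)
    simp only [ContinuousMultilinearMap.apply_apply] at h2
    rw [h2]
    exact tsum_congr fun k => (iteratedDeriv_eq_iteratedFDeriv).symm
  -- identification of summand derivatives on [0,1]
  have hiD_eq : ∀ (k n : ℕ), Set.EqOn (iteratedDeriv n (fterm H k))
      (iteratedDeriv n (gfun H k)) (Ioo (-(2 * ((k:ℝ)+1) ^ 2)⁻¹) (5/4)) :=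
    fun k n => (fterm_eqOn H k).iteratedDeriv_of_isOpen isOpen_Ioo n
  have hgg : ∀ k : ℕ, (fun y : ℝ => H (k + 1) * ((1 - y : ℝ) : ℂ) ^ (k + 1)) = gfun H k := by
    intro k; funext y; unfold gfun; push_cast; ring
  -- estimate on [0,1]
  have hgfun_est : ∀ (n k : ℕ), ∀ x ∈ Icc (0:ℝ) 1,
      ‖iteratedDeriv n (gfun H k) x‖ ≤
        (C * ((n.factorial:ℝ)) ^ 2 / b ^ (2*n)) * Real.exp (-(2*(a-b) * Real.sqrt ((k:ℝ)+1))) := by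
    intro n k x hx
    rw [gfun_iD]
    rw [norm_mul, norm_mul, norm_mul, norm_pow, norm_pow, norm_neg, norm_one, one_pow, one_mul,
      Complex.norm_natCast, norm_one_sub_ofReal]
    have hd : (((k + 1).descFactorial n : ℝ)) ≤ ((k:ℝ) + 1) ^ n := by
      calc (((k + 1).descFactorial n : ℝ)) ≤ (((k + 1) ^ n : ℕ) : ℝ) := by
            exact_mod_cast Nat.descFactorial_le_pow (k + 1) n
        _ = ((k:ℝ) + 1) ^ n := by push_cast; ring
    have habs : |1 - x| ^ (k + 1 - n) ≤ 1 := by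
      apply pow_le_one₀ (abs_nonneg _)
      rw [abs_le]; exact ⟨by linarith [hx.2], by linarith [hx.1]⟩
    have hH2 : ‖H (k + 1)‖ ≤ C * Real.exp (-(2 * a * Real.sqrt ((k:ℝ)+1))) := by
      have h1 := hC' (k+1) (by omega)
      have : ((k+1 : ℕ):ℝ) = (k:ℝ)+1 := by push_cast; ring
      rwa [this] at h1
    have hkey : ((k:ℝ)+1) ^ n * Real.exp (-(2 * b * Real.sqrt ((k:ℝ)+1)))
        ≤ ((n.factorial:ℝ)) ^ 2 / b ^ (2*n) :=
      pow_mul_exp_neg_le hb n (by positivity)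
    have hsplit : Real.exp (-(2 * a * Real.sqrt ((k:ℝ)+1)))
        = Real.exp (-(2*(a-b) * Real.sqrt ((k:ℝ)+1))) *
          Real.exp (-(2 * b * Real.sqrt ((k:ℝ)+1))) := by
      rw [← Real.exp_add]; congr 1; ring
    calc ‖H (k + 1)‖ * ((((k + 1).descFactorial n : ℝ)) * |1 - x| ^ (k + 1 - n))
        ≤ (C * Real.exp (-(2 * a * Real.sqrt ((k:ℝ)+1)))) * (((k:ℝ)+1) ^ n * 1) := by
          apply mul_le_mul hH2 (mul_le_mul hd habs (by positivity) (by positivity))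
            (by positivity) (by positivity)
      _ = C * Real.exp (-(2*(a-b) * Real.sqrt ((k:ℝ)+1))) *
          (((k:ℝ)+1) ^ n * Real.exp (-(2 * b * Real.sqrt ((k:ℝ)+1)))) := by
          rw [hsplit]; ring
      _ ≤ C * Real.exp (-(2*(a-b) * Real.sqrt ((k:ℝ)+1))) * (((n.factorial:ℝ)) ^ 2 / b ^ (2*n)) := by
          apply mul_le_mul_of_nonneg_left hkey (by positivity)
      _ = (C * ((n.factorial:ℝ)) ^ 2 / b ^ (2*n)) * Real.exp (-(2*(a-b) * Real.sqrt ((k:ℝ)+1))) := by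
          ring
  -- summability of the exponential weights
  have hab : (0:ℝ) < 2 * (a - b) := by linarith
  have hDs : Summable (fun k : ℕ => Real.exp (-(2*(a-b) * Real.sqrt ((k:ℝ)+1)))) := by
    have h0 := (summable_nat_add_iff 1).2 (summable_pow_mul_exp hab 0)
    apply h0.congr
    intro k
    push_cast
    ring_nf
  set Dsum : ℝ := ∑' k : ℕ, Real.exp (-(2*(a-b) * Real.sqrt ((k:ℝ)+1))) with hDsum_def
  have hDsum0 : 0 ≤ Dsum := tsum_nonneg (fun k => (Real.exp_pos _).le)
  set K0 : ℝ := C * Dsum with hK0_def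
  have hK00 : 0 ≤ K0 := mul_nonneg hC0 hDsum0
  -- uniform bound for iterated derivatives of U on [0,1]
  have hUic : ∀ (n : ℕ), ∀ x ∈ Icc (0:ℝ) 1,
      ‖iteratedDeriv n U x‖ ≤ K0 * ((n.factorial:ℝ)) ^ 2 / b ^ (2*n) := by
    intro n x hx
    rw [hiDU n x]
    have hnorms : Summable (fun k => ‖iteratedDeriv n (fterm H k) x‖) := by
      apply Summable.of_nonneg_of_le (fun k => norm_nonneg _) _ (hub_sum n)
      intro k
      rw [← norm_iteratedFDeriv_eq_norm_iteratedDeriv]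
      exact fterm_iFD_bound H n k x
    have hterm : ∀ k : ℕ, ‖iteratedDeriv n (fterm H k) x‖ ≤
        (C * ((n.factorial:ℝ)) ^ 2 / b ^ (2*n)) * Real.exp (-(2*(a-b) * Real.sqrt ((k:ℝ)+1))) := by
      intro k
      rw [hiD_eq k n (Icc_subset_Ok k hx)]
      exact hgfun_est n k x hx
    calc ‖∑' k, iteratedDeriv n (fterm H k) x‖
        ≤ ∑' k, ‖iteratedDeriv n (fterm H k) x‖ := norm_tsum_le_tsum_norm hnorms
      _ ≤ ∑' k : ℕ, (C * ((n.factorial:ℝ)) ^ 2 / b ^ (2*n)) *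
          Real.exp (-(2*(a-b) * Real.sqrt ((k:ℝ)+1))) :=
          Summable.tsum_le_tsum hterm hnorms (hDs.mul_left _)
      _ = (C * ((n.factorial:ℝ)) ^ 2 / b ^ (2*n)) * Dsum := tsum_mul_left
      _ = K0 * ((n.factorial:ℝ)) ^ 2 / b ^ (2*n) := by rw [hK0_def]; ring
  refine ⟨U, hU_cd, ?_, ?_, ?_, ?_⟩
  · -- U 1 = 0
    have : (fun k => fterm H k 1) = fun _ : ℕ => (0:ℂ) := by
      funext k
      unfold fterm gfun
      simp
    rw [hU_def]
    simp only [this]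
    exact tsum_zero
  · -- HasSum
    intro x hx
    have hs0' : Summable (fun k => fterm H k x) := by
      apply Summable.of_norm_bounded (hub_sum 0)
      intro k
      rw [← norm_iteratedFDeriv_zero (𝕜 := ℝ) (f := fterm H k) (x := x)]
      exact fterm_iFD_bound H 0 k x
    have heq : (fun k : ℕ => H (k + 1) * ((1 - x : ℝ) : ℂ) ^ (k + 1))
        = fun k => fterm H k x := by
      funext k
      rw [congrFun (hgg k) x]
      exact ((fterm_eqOn H k) (Icc_subset_Ok k hx)).symm
    rw [heq]
    exact hs0'.hasSum
  · -- uniform convergence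
    intro n
    have base := tendstoUniformlyOn_tsum_nat (hub_sum n)
      (f := fun k x => iteratedDeriv n (fterm H k) x)
      (s := Icc (0:ℝ) 1)
      (fun k x _ => by
        rw [← norm_iteratedFDeriv_eq_norm_iteratedDeriv]
        exact fterm_iFD_bound H n k x)
    have base2 := base.congr_right (g := iteratedDeriv n U)
      (fun x _ => (hiDU n x).symm)
    apply base2.congr
    apply Filter.Eventually.of_forall
    intro m x hx
    apply Finset.sum_congr rfl
    intro k _
    rw [hgg k]
    exact (hiD_eq k n (Icc_subset_Ok k hx))
  · -- Xnorm finite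
    have hvcd : ContDiff ℝ (⊤ : ℕ∞) (deriv U) := (contDiff_infty_iff_deriv.mp hU_cd).2
    have hvbd : ∀ n : ℕ, ∀ x ∈ Icc (0:ℝ) 1,
        ‖iteratedDeriv n (deriv U) x‖ ≤ K0 * (((n + 1).factorial : ℝ)) ^ 2 / b ^ (2 * n + 2) := by
      intro n x hx
      have h1 : iteratedDeriv n (deriv U) x = iteratedDeriv (n+1) U x := by
        rw [iteratedDeriv_succ']
      rw [h1]
      have := hUic (n+1) x hx
      rwa [show 2 * (n+1) = 2*n + 2 by ring] at this
    unfold Xnorm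
    refine ENNReal.add_ne_top.2 ⟨ENNReal.add_ne_top.2 ⟨ENNReal.add_ne_top.2
      ⟨?_, ?_⟩, ?_⟩, ?_⟩
    · exact fsem_ne_top hσ hb hσb hK00 hvcd hvbd 0
    · exact fsem_ne_top hσ hb hσb hK00 hvcd hvbd 1
    · exact fsem_ne_top hσ hb hσb hK00 hvcd hvbd 2
    · exact bsem_ne_top hσ hb hσb hK00 hvbd
end
end

section
/- Let s∈ℂ with Re s < 0, and let w:[0,∞)→ℂ be the function w(x) := e^{s/x} for x>0 and w(0) := 0 (which extends to a function that is smooth on [0,∞) with all derivatives vanishing at 0). Then for every σ > −Re s, sup_{k∈ℕ} sup_{x∈[0,∞)} (σ^k/(k!)^2) |w^{(k)}(x)| = ∞, where w^{(k)} denotes the k-th derivative of w. -/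
noncomputable section

open Filter Set MeasureTheory
open scoped ENNReal Topology

open Polynomial in
def expPoly (s : ℂ) : ℕ → Polynomial ℂ
  | 0 => 1
  | n + 1 => -(X ^ 2) * (derivative (expPoly s n) + C s * expPoly s n)

def gfun (s : ℂ) (n : ℕ) (x : ℝ) : ℂ :=
  if x ≤ 0 then 0 else (expPoly s n).eval ((x : ℂ))⁻¹ * Complex.exp (s / x)

lemma aux_pow_exp {b : ℝ} (hb : 0 < b) (i : ℕ) :
    Tendsto (fun x : ℝ => x ^ i * Real.exp (-(b * x))) atTop (𝓝 0) := by
  have h1 : Tendsto (fun x : ℝ => b * x) atTop atTop :=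
    Tendsto.const_mul_atTop hb tendsto_id
  have h2 := (Real.tendsto_pow_mul_exp_neg_atTop_nhds_zero i).comp h1
  have h3 := h2.const_mul ((b ^ i)⁻¹)
  rw [mul_zero] at h3
  refine h3.congr fun x => ?_
  simp only [Function.comp_apply]
  rw [mul_pow]
  field_simp

lemma aux_poly_exp {s : ℂ} (hs : s.re < 0) (Q : Polynomial ℂ) :
    Tendsto (fun x : ℝ => Q.eval ((x : ℂ))⁻¹ * Complex.exp (s / x)) (𝓝[>] (0:ℝ)) (𝓝 0) := by
  have key : Tendsto (fun t : ℝ => Q.eval (t : ℂ) * Complex.exp (s * t)) atTop (𝓝 0) := by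
    have h : ∀ i : ℕ, Tendsto (fun t : ℝ => Q.coeff i * ((t : ℂ) ^ i * Complex.exp (s * t)))
        atTop (𝓝 0) := by
      intro i
      rw [show (0 : ℂ) = Q.coeff i * 0 by simp]
      refine Tendsto.const_mul _ ?_
      rw [tendsto_zero_iff_norm_tendsto_zero]
      have hb : (0:ℝ) < -s.re := by linarith
      have h2 := aux_pow_exp hb i
      refine Tendsto.congr' ?_ h2
      filter_upwards [eventually_ge_atTop (0:ℝ)] with t ht
      rw [norm_mul, norm_pow, Complex.norm_real, Real.norm_eq_abs, abs_of_nonneg ht,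
        Complex.norm_exp]
      have : (s * (t:ℂ)).re = s.re * t := by simp [Complex.mul_re]
      rw [this, neg_mul, neg_neg]
    have h3 := tendsto_finset_sum (Finset.range (Q.natDegree + 1)) (fun i _ => h i)
    rw [Finset.sum_const_zero] at h3
    refine h3.congr fun t => ?_
    rw [Polynomial.eval_eq_sum_range, Finset.sum_mul]
    exact Finset.sum_congr rfl fun i _ => (mul_assoc _ _ _).symm
  have hinv : Tendsto (fun x : ℝ => x⁻¹) (𝓝[>] (0:ℝ)) atTop := tendsto_inv_nhdsGT_zero
  refine (key.comp hinv).congr fun x => ?_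
  simp only [Function.comp_apply]
  rw [Complex.ofReal_inv, div_eq_mul_inv]

lemma gfun_hasDerivAt (s : ℂ) (n : ℕ) {x : ℝ} (hx : 0 < x) :
    HasDerivAt (gfun s n) (gfun s (n + 1) x) x := by
  have hx0 : (x : ℂ) ≠ 0 := by exact_mod_cast hx.ne'
  have hinv : HasDerivAt (fun y : ℝ => ((y : ℂ))⁻¹) (-(1 : ℂ) / (x : ℂ) ^ 2) x := by
    have h1 : HasDerivAt (fun y : ℝ => (y : ℂ)) 1 x := by
      simpa using (hasDerivAt_id x).ofReal_comp
    have h2 := (hasDerivAt_const x (1:ℂ)).div h1 hx0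
    simp only [Pi.div_def, one_div] at h2
    convert h2 using 1
    · rfl
    ring
  have hG : HasDerivAt (fun z : ℂ => (expPoly s n).eval z * Complex.exp (s * z))
      ((expPoly s n).derivative.eval ((x : ℂ))⁻¹ * Complex.exp (s * ((x : ℂ))⁻¹)
        + (expPoly s n).eval ((x : ℂ))⁻¹ * (Complex.exp (s * ((x : ℂ))⁻¹) * s)) (((x : ℂ))⁻¹) := by
    have h1 := Polynomial.hasDerivAt (expPoly s n) (((x : ℂ))⁻¹)
    have h2 : HasDerivAt (fun z : ℂ => Complex.exp (s * z))
        (Complex.exp (s * ((x : ℂ))⁻¹) * s) (((x : ℂ))⁻¹) := by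
      simpa using ((hasDerivAt_id (((x : ℂ))⁻¹)).const_mul s).cexp
    exact h1.mul h2
  have h3 := hG.scomp x hinv
  have heq : gfun s n =ᶠ[𝓝 x]
      ((fun z : ℂ => (expPoly s n).eval z * Complex.exp (s * z)) ∘ fun y : ℝ => ((y : ℂ))⁻¹) := by
    filter_upwards [Ioi_mem_nhds hx] with y hy
    simp only [gfun, Function.comp_apply, if_neg (not_le.mpr (mem_Ioi.mp hy)), div_eq_mul_inv]
  have h4 := h3.congr_of_eventuallyEq heq
  convert h4 using 1
  · rfl
  simp only [gfun, if_neg (not_le.mpr hx), expPoly, Polynomial.eval_mul, Polynomial.eval_add,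
    Polynomial.eval_neg, Polynomial.eval_pow, Polynomial.eval_X, Polynomial.eval_C,
    smul_eq_mul, div_eq_mul_inv]
  ring

lemma gfun_hasDerivWithinAt_zero {s : ℂ} (hs : s.re < 0) (n : ℕ) :
    HasDerivWithinAt (gfun s n) 0 (Ici (0:ℝ)) 0 := by
  rw [hasDerivWithinAt_iff_tendsto_slope, Set.Ici_sdiff_left]
  have h := aux_poly_exp hs (Polynomial.X * expPoly s n)
  refine Tendsto.congr' ?_ h
  filter_upwards [self_mem_nhdsWithin] with y hy
  have hy' : (0:ℝ) < y := mem_Ioi.mp hy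
  rw [slope_def_module]
  simp only [gfun, if_neg (not_le.mpr hy'), if_pos le_rfl, sub_zero, Complex.real_smul,
    Complex.ofReal_inv, Polynomial.eval_mul, Polynomial.eval_X]
  ring

lemma gfun_hasDerivWithinAt {s : ℂ} (hs : s.re < 0) (n : ℕ) {t : Set ℝ} (ht : t ⊆ Ici 0)
    {x : ℝ} (hx : 0 ≤ x) : HasDerivWithinAt (gfun s n) (gfun s (n + 1) x) t x := by
  rcases hx.lt_or_eq with h | h
  · exact (gfun_hasDerivAt s n h).hasDerivWithinAt
  · rw [← h]
    have h0 : gfun s (n + 1) 0 = 0 := by simp [gfun]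
    rw [← h] at *
    rw [h0]
    exact (gfun_hasDerivWithinAt_zero hs n).mono ht

lemma gfun_contDiffOn {s : ℂ} (hs : s.re < 0) (m n : ℕ) :
    ContDiffOn ℝ m (gfun s n) (Ici (0:ℝ)) := by
  induction m generalizing n with
  | zero =>
    rw [show ((0:ℕ) : WithTop ℕ∞) = 0 from rfl, contDiffOn_zero]
    exact fun x hx => (gfun_hasDerivWithinAt hs n subset_rfl hx).continuousWithinAt
  | succ m ih =>
    rw [show ((m + 1 : ℕ) : WithTop ℕ∞) = (m : WithTop ℕ∞) + 1 by push_cast; ring,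
      contDiffOn_succ_iff_derivWithin (uniqueDiffOn_Ici 0)]
    refine ⟨fun x hx => (gfun_hasDerivWithinAt hs n subset_rfl hx).differentiableWithinAt,
      ?_, ?_⟩
    · intro h
      exact absurd h (by simp)
    · exact (ih (n + 1)).congr fun x hx =>
        (gfun_hasDerivWithinAt hs n subset_rfl hx).derivWithin (uniqueDiffOn_Ici 0 x hx)

lemma w_eqOn {s : ℂ} (w : ℝ → ℂ)
    (hw : ∀ x : ℝ, w x = if x = 0 then 0 else Complex.exp (s / (x : ℂ))) :
    Set.EqOn w (gfun s 0) (Ici (0:ℝ)) := by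
  intro x hx
  rcases (mem_Ici.mp hx).lt_or_eq with h | h
  · rw [hw, if_neg h.ne', gfun, if_neg (not_le.mpr h)]
    simp [expPoly]
  · rw [← h, hw]
    simp [gfun]

lemma iteratedDeriv_w_pos {s : ℂ} (w : ℝ → ℂ)
    (hw : ∀ x : ℝ, w x = if x = 0 then 0 else Complex.exp (s / (x : ℂ))) (n : ℕ) :
    ∀ x : ℝ, 0 < x → iteratedDeriv n w x = gfun s n x := by
  induction n with
  | zero =>
    intro x hx
    rw [iteratedDeriv_zero, hw, if_neg hx.ne', gfun, if_neg (not_le.mpr hx)]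
    simp [expPoly]
  | succ n ih =>
    intro x hx
    rw [iteratedDeriv_succ]
    have heq : iteratedDeriv n w =ᶠ[𝓝 x] gfun s n := by
      filter_upwards [Ioi_mem_nhds hx] with y hy
      exact ih y (mem_Ioi.mp hy)
    rw [heq.deriv_eq, (gfun_hasDerivAt s n hx).deriv]

lemma iteratedDerivWithin_w_Icc {s : ℂ} (hs : s.re < 0) (w : ℝ → ℂ)
    (hw : ∀ x : ℝ, w x = if x = 0 then 0 else Complex.exp (s / (x : ℂ)))
    {b : ℝ} (hb : 0 < b) (n : ℕ) :
    ∀ x ∈ Icc (0:ℝ) b, iteratedDerivWithin n w (Icc 0 b) x = gfun s n x := by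
  induction n with
  | zero =>
    intro x hx
    rw [iteratedDerivWithin_zero]
    exact w_eqOn w hw (mem_Ici.mpr hx.1)
  | succ n ih =>
    intro x hx
    rw [iteratedDerivWithin_succ,
      derivWithin_congr ih (ih x hx)]
    exact ((gfun_hasDerivWithinAt hs n (fun y hy => hy.1) hx.1).mono
      (subset_refl _)).derivWithin ((uniqueDiffOn_Icc hb) x hx)

lemma fact_exp_bound : ∀ m : ℕ, 1 ≤ m →
    (m.factorial : ℝ) * Real.exp m ≤ Real.exp 1 * (m : ℝ) ^ (m + 1) := by
  intro m hm
  induction m with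
  | zero => omega
  | succ k ih =>
    rcases Nat.eq_or_lt_of_le hm with h | h
    · rw [← h]; norm_num
    · have hk : 1 ≤ k := by omega
      have ihk := ih hk
      have hk0 : (0:ℝ) < k := by exact_mod_cast hk
      have hkey : Real.exp 1 * (k : ℝ) ^ (k + 1) ≤ ((k : ℝ) + 1) ^ (k + 1) := by
        have h1 : Real.exp (1 / ((k : ℝ) + 1)) ≤ ((k : ℝ) + 1) / k := by
          have h2 := Real.add_one_le_exp (-(1 / ((k : ℝ) + 1)))
          have h3 : (0:ℝ) < (k : ℝ) / ((k : ℝ) + 1) := by positivity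
          have h4 : (k : ℝ) / ((k : ℝ) + 1) ≤ Real.exp (-(1 / ((k : ℝ) + 1))) := by
            have : -(1 / ((k : ℝ) + 1)) + 1 = (k : ℝ) / ((k : ℝ) + 1) := by
              field_simp
              ring
            linarith
          rw [Real.exp_neg] at h4
          calc Real.exp (1 / ((k : ℝ) + 1)) ≤ ((k : ℝ) / ((k : ℝ) + 1))⁻¹ := by
                rw [← inv_inv (Real.exp _)]
                exact inv_anti₀ (by positivity) h4
            _ = ((k : ℝ) + 1) / k := by rw [inv_div]
        have h5 : Real.exp 1 ≤ (((k : ℝ) + 1) / k) ^ (k + 1) := by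
          have h6 : Real.exp 1 = Real.exp (1 / ((k : ℝ) + 1)) ^ (k + 1) := by
            rw [← Real.exp_nat_mul]
            congr 1
            push_cast
            field_simp
          rw [h6]
          exact pow_le_pow_left₀ (Real.exp_nonneg _) h1 (k + 1)
        calc Real.exp 1 * (k : ℝ) ^ (k + 1)
            ≤ (((k : ℝ) + 1) / k) ^ (k + 1) * (k : ℝ) ^ (k + 1) := by
              exact mul_le_mul_of_nonneg_right h5 (by positivity)
          _ = ((k : ℝ) + 1) ^ (k + 1) := by
              rw [div_pow, div_mul_cancel₀]
              positivity
      rw [Nat.factorial_succ]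
      push_cast
      calc ((k:ℝ) + 1) * (k.factorial : ℝ) * Real.exp ((k:ℝ) + 1)
          = ((k:ℝ) + 1) * Real.exp 1 * ((k.factorial : ℝ) * Real.exp (k:ℝ)) := by
            rw [Real.exp_add]; ring
        _ ≤ ((k:ℝ) + 1) * Real.exp 1 * (Real.exp 1 * (k:ℝ) ^ (k + 1)) :=
            mul_le_mul_of_nonneg_left ihk (by positivity)
        _ = Real.exp 1 * (((k:ℝ) + 1) * (Real.exp 1 * (k:ℝ) ^ (k + 1))) := by ring
        _ ≤ Real.exp 1 * (((k:ℝ) + 1) * ((k:ℝ) + 1) ^ (k + 1)) := by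
            refine mul_le_mul_of_nonneg_left
              (mul_le_mul_of_nonneg_left hkey (by positivity)) (by positivity)
        _ = Real.exp 1 * ((k:ℝ) + 1) ^ (k + 1 + 1) := by rw [pow_succ]; ring


/-- (Lemma `expLem`.) Let `Re s < 0` and `w(x) = e^{s/x}` for `x > 0`,
`w(0) = 0`. Then `w` is smooth on `[0,∞)`, and for every `σ > −Re s`,
`sup_k sup_{x ≥ 0} (σ^k/(k!)²)|w^{(k)}(x)| = ∞`. -/
theorem statement19 (s : ℂ) (hs : s.re < 0) (w : ℝ → ℂ)
    (hw : ∀ x : ℝ, w x = if x = 0 then 0 else Complex.exp (s / (x : ℂ))) :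
    ContDiffOn ℝ (⊤ : ℕ∞) w (Set.Ici 0) ∧
    ∀ σ : ℝ, -s.re < σ →
      (⨆ (k : ℕ) (x : ℝ) (_ : 0 ≤ x),
          ENNReal.ofReal (σ ^ k / ((k.factorial : ℝ)) ^ 2 * ‖iteratedDeriv k w x‖)) = ⊤ := by
  have hsmooth : ContDiffOn ℝ (⊤ : ℕ∞) w (Set.Ici 0) := by
    have h : ContDiffOn ℝ (⊤ : ℕ∞) (gfun s 0) (Ici (0:ℝ)) :=
      contDiffOn_infty.2 (fun m => gfun_contDiffOn hs m 0)
    exact h.congr (w_eqOn w hw)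
  refine ⟨hsmooth, ?_⟩
  intro σ hσ
  by_contra hS
  have hσ0 : 0 < σ := lt_trans (by linarith) hσ
  set M : ℝ := (⨆ (k : ℕ) (x : ℝ) (_ : 0 ≤ x),
      ENNReal.ofReal (σ ^ k / ((k.factorial : ℝ)) ^ 2 * ‖iteratedDeriv k w x‖)).toReal with hMdef
  have hM0 : 0 ≤ M := ENNReal.toReal_nonneg
  have hterm : ∀ (k : ℕ) (x : ℝ), 0 ≤ x →
      σ ^ k / ((k.factorial : ℝ)) ^ 2 * ‖iteratedDeriv k w x‖ ≤ M := by
    intro k x hx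
    refine (ENNReal.ofReal_le_iff_le_toReal hS).1 ?_
    exact le_iSup_of_le k (le_iSup_of_le x (le_iSup_of_le hx le_rfl))
  set c : ℝ := -s.re / σ with hcdef
  have hc1 : c < 1 := by rw [hcdef, div_lt_one hσ0]; linarith
  have hc0 : 0 < c := div_pos (by linarith) hσ0
  have key : ∀ K : ℕ, 1 ≤ K →
      Real.exp (-(c * K)) ≤ M * (K.factorial : ℝ) * K / (K : ℝ) ^ K := by
    intro K hK
    obtain ⟨n, rfl⟩ : ∃ n, K = n + 1 := ⟨K - 1, (Nat.succ_pred_eq_of_pos hK).symm⟩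
    set b := σ / ((n + 1 : ℕ) : ℝ) with hbdef
    have hb : 0 < b := by rw [hbdef]; positivity
    have hC0 : 0 ≤ M * (((n + 1).factorial : ℝ)) ^ 2 / σ ^ (n + 1) := by positivity
    have hC : ∀ y ∈ Icc (0:ℝ) b, ‖iteratedDerivWithin (n + 1) w (Icc 0 b) y‖
        ≤ M * (((n + 1).factorial : ℝ)) ^ 2 / σ ^ (n + 1) := by
      intro y hy
      rw [iteratedDerivWithin_w_Icc hs w hw hb (n + 1) y hy]
      rcases hy.1.lt_or_eq with h | h
      · rw [← iteratedDeriv_w_pos w hw (n + 1) y h]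
        have h2 := hterm (n + 1) y (le_of_lt h)
        rw [div_mul_eq_mul_div,
          div_le_iff₀ (by positivity : (0:ℝ) < (((n + 1).factorial : ℝ)) ^ 2)] at h2
        rw [le_div_iff₀ (by positivity : (0:ℝ) < σ ^ (n + 1)), mul_comm]
        exact h2
      · rw [← h]
        simpa [gfun] using hC0
    have hcd : ContDiffOn ℝ (n + 1 : ℕ) w (Icc 0 b) :=
      (hsmooth.mono Icc_subset_Ici_self).of_le (by exact_mod_cast le_top)
    have htaylor := taylor_mean_remainder_bound hb.le hcd (right_mem_Icc.mpr hb.le) hC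
    have htp : taylorWithinEval w n (Icc 0 b) 0 b = 0 := by
      rw [taylor_within_apply]
      refine Finset.sum_eq_zero fun k _ => ?_
      rw [iteratedDerivWithin_w_Icc hs w hw hb k 0 (left_mem_Icc.mpr hb.le)]
      simp [gfun]
    rw [htp, sub_zero] at htaylor
    have hwb : ‖w b‖ = Real.exp (s.re / b) := by
      rw [hw, if_neg hb.ne', Complex.norm_exp, Complex.div_ofReal_re]
    rw [hwb] at htaylor
    have hlhs : s.re / b = -(c * ((n + 1 : ℕ) : ℝ)) := by
      rw [hbdef, hcdef]
      have : ((n + 1 : ℕ) : ℝ) ≠ 0 := by positivity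
      field_simp
    have hfac : (((n + 1).factorial : ℝ)) = ((n + 1 : ℕ) : ℝ) * (n.factorial : ℝ) := by
      rw [Nat.factorial_succ]; push_cast; ring
    have hrhs : M * (((n + 1).factorial : ℝ)) ^ 2 / σ ^ (n + 1) * (b - 0) ^ (n + 1)
          / (n.factorial : ℝ)
        = M * (((n + 1).factorial : ℝ)) * ((n + 1 : ℕ) : ℝ) / ((n + 1 : ℕ) : ℝ) ^ (n + 1) := by
      rw [sub_zero, hbdef, div_pow, hfac]
      have h1 : (n.factorial : ℝ) ≠ 0 := by positivity
      have h2 : ((n + 1 : ℕ) : ℝ) ≠ 0 := by positivity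
      have h3 : σ ^ (n + 1) ≠ 0 := by positivity
      field_simp
    rw [hlhs, hrhs] at htaylor
    exact htaylor
  have key2 : ∀ K : ℕ, 1 ≤ K →
      1 ≤ M * Real.exp 1 * ((K : ℝ) ^ 2 * Real.exp (-((1 - c) * (K : ℝ)))) := by
    intro K hK
    have h1 := key K hK
    have h2 := fact_exp_bound K hK
    have hK0 : (0:ℝ) < (K : ℝ) := by exact_mod_cast hK
    have hKK : (0:ℝ) < (K : ℝ) ^ K := by positivity
    have h3 : M * (K.factorial : ℝ) * K / (K : ℝ) ^ K
        ≤ M * Real.exp 1 * (K : ℝ) ^ 2 / Real.exp K := by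
      rw [div_le_div_iff₀ hKK (Real.exp_pos _)]
      have h4 : (K.factorial : ℝ) * Real.exp K * ((K:ℝ) * (K:ℝ) ^ K)
          ≤ Real.exp 1 * (K : ℝ) ^ (K + 1) * ((K:ℝ) * (K:ℝ) ^ K) := by
        exact mul_le_mul_of_nonneg_right h2 (by positivity)
      calc M * (K.factorial : ℝ) * (K:ℝ) * Real.exp (K:ℝ)
          = M * ((K.factorial : ℝ) * Real.exp (K:ℝ)) * (K:ℝ) := by ring
        _ ≤ M * (Real.exp 1 * (K : ℝ) ^ (K + 1)) * (K:ℝ) := by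
            refine mul_le_mul_of_nonneg_right (mul_le_mul_of_nonneg_left h2 hM0) hK0.le
        _ = M * Real.exp 1 * (K : ℝ) ^ 2 * (K : ℝ) ^ K := by
            rw [pow_succ]; ring
    have h5 : Real.exp (-(c * (K:ℝ))) ≤ M * Real.exp 1 * (K : ℝ) ^ 2 / Real.exp (K:ℝ) :=
      le_trans h1 h3
    rw [div_eq_mul_inv, ← Real.exp_neg] at h5
    have h8 := mul_le_mul_of_nonneg_right h5 (Real.exp_pos (K:ℝ)).le
    have e1 : Real.exp (-(c * (K:ℝ))) * Real.exp (K:ℝ) = Real.exp ((1 - c) * (K:ℝ)) := by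
      rw [← Real.exp_add]; congr 1; ring
    have e2 : M * Real.exp 1 * (K:ℝ) ^ 2 * Real.exp (-(K:ℝ)) * Real.exp (K:ℝ)
        = M * Real.exp 1 * (K:ℝ) ^ 2 := by
      rw [mul_assoc (M * Real.exp 1 * (K:ℝ) ^ 2), ← Real.exp_add]
      simp
    rw [e1, e2] at h8
    rw [show M * Real.exp 1 * ((K:ℝ) ^ 2 * Real.exp (-((1 - c) * (K:ℝ))))
        = M * Real.exp 1 * (K:ℝ) ^ 2 / Real.exp ((1 - c) * (K:ℝ)) by
      rw [Real.exp_neg]; ring]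
    rw [le_div_iff₀ (Real.exp_pos _), one_mul]
    exact h8
  have hlim : Tendsto (fun N : ℕ => M * Real.exp 1 *
      (((N:ℝ)) ^ 2 * Real.exp (-((1 - c) * (N:ℝ))))) atTop (𝓝 0) := by
    have h1 := (aux_pow_exp (show (0:ℝ) < 1 - c by linarith) 2).comp
      tendsto_natCast_atTop_atTop
    have h2 := h1.const_mul (M * Real.exp 1)
    rw [mul_zero] at h2
    exact h2.congr fun N => by simp [Function.comp_apply]
  obtain ⟨N, hN1, hN2⟩ :=
    ((hlim.eventually_lt_const (by norm_num : (0:ℝ) < 1)).and (eventually_ge_atTop 1)).exists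
  exact absurd (key2 N hN2) (not_le.mpr hN1)
end
end
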